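/- arXiv:1303.0370 — 3 statements merged into one kernel-verified Lean document; each statement's English description precedes it below -/
import Mathlib

section
/- (Falconer–Marsh) Let ρ = (ρ₁, …, ρ_m) and τ = (τ₁, …, τ_n) be contraction vectors for ℝ^d, and suppose E ∈ D(ρ) and F ∈ D(τ) are Lipschitz equivalent. Let s > 0 be their common Hausdorff dimension, so that ρ₁^s + ⋯ + ρ_m^s = 1 = τ₁^s + ⋯ + τ_n^s. Then: (1) the subfield of ℝ generated by ℚ and {ρ₁^s, …, ρ_m^s} equals the subfield of ℝ generated by ℚ and {τ₁^s, …, τ_n^s}; (2) there exist positive integers p, q such that the multiplicative subsemigroup of (ℝ_{>0}, ×) generated by ρ₁^p, …, ρ_m^p is contained in the subsemigroup generated by τ₁, …, τ_n, and the subsemigroup generated by τ₁^q, …, τ_n^q is contained in the subsemigroup generated by ρ₁, …, ρ_m. -/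
open Set Metric MeasureTheory

noncomputable section

/-- Two subsets of a metric space are Lipschitz equivalent if there is a
bi-Lipschitz bijection between them. -/
def LipschitzEquivalent {X : Type*} [MetricSpace X] (E F : Set X) : Prop :=
  ∃ (f : X → X) (C : ℝ), 0 < C ∧ Set.BijOn f E F ∧
    ∀ x ∈ E, ∀ y ∈ E,
      C⁻¹ * dist x y ≤ dist (f x) (f y) ∧ dist (f x) (f y) ≤ C * dist x y

/-- `φ` is a similarity with ratio `r`. -/
def IsSimilarity {X : Type*} [MetricSpace X] (r : ℝ) (φ : X → X) : Prop :=
  ∀ x y, dist (φ x) (φ y) = r * dist x y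

/-- `ρ = (ρ₁, …, ρ_m)` is a contraction vector for `ℝ^d`. -/
def IsContractionVector (d m : ℕ) (ρ : Fin m → ℝ) : Prop :=
  (∀ j, ρ j ∈ Set.Ioo (0:ℝ) 1) ∧ ∑ j, ρ j ^ d < 1

/-- `E` is a dust-like self-similar set with contraction vector `ρ`,
i.e. `E ∈ D(ρ)`. -/
def IsDustLike {X : Type*} [MetricSpace X] {m : ℕ} (ρ : Fin m → ℝ) (E : Set X) : Prop :=
  E.Nonempty ∧ IsCompact E ∧
  ∃ φ : Fin m → X → X,
    (∀ j, IsSimilarity (ρ j) (φ j)) ∧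
    E = ⋃ j, φ j '' E ∧
    Pairwise fun j k => Disjoint (φ j '' E) (φ k '' E)

set_option maxHeartbeats 4000000

section FMaux
open List




/-- squeeze: if `a` is within every multiplicative error of `b`, it equals `b`. -/
lemma eq_of_all_near {a b : ℝ} (hb : 0 < b)
    (h : ∀ ζ : ℝ, 0 < ζ → b * (1 - ζ) ≤ a ∧ a ≤ b * (1 + ζ)) : a = b := by
  have hb' : b ≠ 0 := ne_of_gt hb
  have hle : a ≤ b := by
    by_contra hab
    push_neg at hab
    have h1 : (0:ℝ) < (a - b) / (2 * b) := div_pos (by linarith) (by linarith)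
    have h2 := (h _ h1).2
    have h3 : b * (1 + (a - b) / (2 * b)) = b + (a - b) / 2 := by
      field_simp
    rw [h3] at h2; linarith
  have hge : b ≤ a := by
    by_contra hab
    push_neg at hab
    have h1 : (0:ℝ) < (b - a) / (2 * b) := div_pos (by linarith) (by linarith)
    have h2 := (h _ h1).1
    have h3 : b * (1 - (b - a) / (2 * b)) = b - (b - a) / 2 := by
      field_simp
    rw [h3] at h2; linarith
  linarith

/-- pigeonhole: a function from `ℕ` to a finite collection has an infinite fiber. -/
lemma exists_infinite_fiber_finset {α : Type*} (f : ℕ → α) (s : Finset α)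
    (h : ∀ r, f r ∈ s) : ∃ a, {r | f r = a}.Infinite := by
  by_contra hcon
  push_neg at hcon
  have : (Set.univ : Set ℕ).Finite := by
    have hsub : (Set.univ : Set ℕ) ⊆ ⋃ a ∈ (s : Set α), {r | f r = a} := by
      intro r _
      exact Set.mem_biUnion (h r) rfl
    exact Set.Finite.subset (Set.Finite.biUnion (s.finite_toSet) fun a _ => hcon a) hsub
  exact Set.infinite_univ this

lemma Subsemigroup.pow_mem' {M : Type*} [Monoid M] (S : Subsemigroup M) {x : M}
    (hx : x ∈ S) : ∀ {c : ℕ}, 0 < c → x ^ c ∈ S := by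
  intro c hc
  induction c with
  | zero => omega
  | succ k ih =>
    rcases Nat.eq_zero_or_pos k with hk | hk
    · subst hk; simpa using hx
    · rw [pow_succ]
      exact S.mul_mem (ih hk) hx





structure DustSys (X : Type*) [MetricSpace X] where
  k : ℕ
  σ : Fin k → ℝ
  S : Set X
  φ : Fin k → X → X
  hσ0 : ∀ j, 0 < σ j
  hσ1 : ∀ j, σ j < 1
  hne : S.Nonempty
  hcomp : IsCompact S
  hsim : ∀ j x y, dist (φ j x) (φ j y) = σ j * dist x y
  hunion : S = ⋃ j, φ j '' S
  hdisj : Pairwise fun j j' => Disjoint (φ j '' S) (φ j' '' S)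

namespace DustSys

variable {X : Type*} [MetricSpace X] (D : DustSys X)

/-- product of ratios along a word -/
def pr (i : List (Fin D.k)) : ℝ := (i.map D.σ).prod

/-- the composed similarity along a word -/
def Φ (i : List (Fin D.k)) : X → X := i.foldr (fun u g => D.φ u ∘ g) id

/-- cylinder set -/
def cyl (i : List (Fin D.k)) : Set X := D.Φ i '' D.S

@[simp] lemma pr_nil : D.pr ([] : List (Fin D.k)) = 1 := rfl

@[simp] lemma pr_cons (u : Fin D.k) (i : List (Fin D.k)) :
    D.pr (u :: i) = D.σ u * D.pr i := by
  simp [pr]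

@[simp] lemma pr_append (i i' : List (Fin D.k)) :
    D.pr (i ++ i') = D.pr i * D.pr i' := by
  simp [pr]

lemma pr_pos (i : List (Fin D.k)) : 0 < D.pr i := by
  induction i with
  | nil => simp
  | cons u i ih => rw [pr_cons]; exact mul_pos (D.hσ0 u) ih

lemma pr_le_one (i : List (Fin D.k)) : D.pr i ≤ 1 := by
  induction i with
  | nil => simp
  | cons u i ih =>
    rw [pr_cons]
    calc D.σ u * D.pr i ≤ 1 * 1 := by
          apply mul_le_mul (le_of_lt (D.hσ1 u)) ih (le_of_lt (pr_pos D i)) zero_le_one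
      _ = 1 := by ring

lemma pr_lt_one {i : List (Fin D.k)} (h : i ≠ []) : D.pr i < 1 := by
  cases i with
  | nil => exact absurd rfl h
  | cons u i =>
    rw [pr_cons]
    calc D.σ u * D.pr i ≤ D.σ u * 1 :=
          mul_le_mul_of_nonneg_left (pr_le_one D i) (le_of_lt (D.hσ0 u))
      _ = D.σ u := mul_one _
      _ < 1 := D.hσ1 u

lemma pr_prefix_le {i i' : List (Fin D.k)} (h : i <+: i') : D.pr i' ≤ D.pr i := by
  obtain ⟨t, rfl⟩ := h
  rw [pr_append]
  calc D.pr i * D.pr t ≤ D.pr i * 1 :=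
        mul_le_mul_of_nonneg_left (pr_le_one D t) (le_of_lt (pr_pos D i))
    _ = D.pr i := mul_one _

@[simp] lemma Φ_nil : D.Φ ([] : List (Fin D.k)) = id := rfl

@[simp] lemma Φ_cons (u : Fin D.k) (i : List (Fin D.k)) :
    D.Φ (u :: i) = D.φ u ∘ D.Φ i := rfl

lemma Φ_append (i i' : List (Fin D.k)) : D.Φ (i ++ i') = D.Φ i ∘ D.Φ i' := by
  induction i with
  | nil => simp
  | cons u i ih =>
    show D.Φ (u :: (i ++ i')) = _
    rw [Φ_cons, ih, Φ_cons]
    rfl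

lemma dist_Φ (i : List (Fin D.k)) (x y : X) :
    dist (D.Φ i x) (D.Φ i y) = D.pr i * dist x y := by
  induction i with
  | nil => simp
  | cons u i ih =>
    rw [Φ_cons]
    show dist (D.φ u (D.Φ i x)) (D.φ u (D.Φ i y)) = _
    rw [D.hsim u, ih, pr_cons]; ring

lemma Φ_inj (i : List (Fin D.k)) : Function.Injective (D.Φ i) := by
  intro x y h
  have h2 : D.pr i * dist x y = 0 := by
    rw [← dist_Φ D i, h, dist_self]
  rcases mul_eq_zero.mp h2 with h1 | h1
  · exact absurd h1 (ne_of_gt (pr_pos D i))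
  · exact dist_eq_zero.mp h1

lemma φ_inj (u : Fin D.k) : Function.Injective (D.φ u) :=
  fun a b h => D.Φ_inj [u] (show D.Φ [u] a = D.Φ [u] b from h)

@[simp] lemma cyl_nil : D.cyl ([] : List (Fin D.k)) = D.S := by simp [cyl]

lemma cyl_cons (u : Fin D.k) (i : List (Fin D.k)) :
    D.cyl (u :: i) = D.φ u '' D.cyl i := by
  show (D.φ u ∘ D.Φ i) '' D.S = _
  rw [Set.image_comp]
  rfl

lemma cyl_append (i i' : List (Fin D.k)) :
    D.cyl (i ++ i') = D.Φ i '' D.cyl i' := by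
  show D.Φ (i ++ i') '' D.S = _
  rw [Φ_append, Set.image_comp]
  rfl

lemma phi_sub (u : Fin D.k) : D.φ u '' D.S ⊆ D.S := by
  conv_rhs => rw [D.hunion]
  exact Set.subset_iUnion (fun j => D.φ j '' D.S) u

lemma cyl_sub (i : List (Fin D.k)) : D.cyl i ⊆ D.S := by
  induction i with
  | nil => simp
  | cons u i ih =>
    rw [cyl_cons]
    exact (Set.image_mono ih).trans (phi_sub D u)

lemma cyl_ne (i : List (Fin D.k)) : (D.cyl i).Nonempty := D.hne.image _

lemma cyl_mono {i i' : List (Fin D.k)} (h : i <+: i') : D.cyl i' ⊆ D.cyl i := by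
  obtain ⟨t, rfl⟩ := h
  rw [cyl_append]
  exact (Set.image_mono (cyl_sub D t))

lemma k_pos : 0 < D.k := by
  obtain ⟨x, hx⟩ := D.hne
  rw [D.hunion] at hx
  obtain ⟨j, -⟩ := Set.mem_iUnion.mp hx
  exact j.pos

/-- existence of a uniform gap between the first-level pieces -/
lemma exists_gap : ∃ γ : ℝ, 0 < γ ∧ ∀ (j j' : Fin D.k), j ≠ j' →
    ∀ x ∈ D.φ j '' D.S, ∀ y ∈ D.φ j' '' D.S, γ ≤ dist x y := by
  have hcont : ∀ j, Continuous (D.φ j) := by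
    intro j
    refine (LipschitzWith.of_dist_le_mul (K := Real.toNNReal (D.σ j)) ?_).continuous
    intro x y
    rw [D.hsim j, Real.coe_toNNReal _ (le_of_lt (D.hσ0 j))]
  have hK : ∀ j, IsCompact (D.φ j '' D.S) := fun j => D.hcomp.image (hcont j)
  set T : Set (X × X) :=
    ⋃ p ∈ {p : Fin D.k × Fin D.k | p.1 ≠ p.2}, (D.φ p.1 '' D.S) ×ˢ (D.φ p.2 '' D.S) with hT
  have hTc : IsCompact T := by
    apply Set.Finite.isCompact_biUnion (Set.toFinite _)
    intro p _
    exact (hK p.1).prod (hK p.2)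
  rcases T.eq_empty_or_nonempty with hTe | hTne
  · refine ⟨1, one_pos, ?_⟩
    intro j j' hjj x hx y hy
    exfalso
    have : (x, y) ∈ T := by
      rw [hT]
      exact Set.mem_biUnion (show (j, j') ∈ {p : Fin D.k × Fin D.k | p.1 ≠ p.2} from hjj)
        (Set.mk_mem_prod hx hy)
    rw [hTe] at this
    exact this
  · obtain ⟨z, hzT, hmin⟩ := hTc.exists_isMinOn hTne
      (continuous_dist.continuousOn : ContinuousOn (fun q : X × X => dist q.1 q.2) T)
    refine ⟨dist z.1 z.2, ?_, ?_⟩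
    · rw [dist_pos]
      rw [hT] at hzT
      obtain ⟨p, hp, hz⟩ := Set.mem_iUnion₂.mp hzT
      obtain ⟨hz1, hz2⟩ := hz
      intro hzz
      have hdis := D.hdisj hp
      exact (Set.disjoint_left.mp hdis hz1) (hzz ▸ hz2)
    · intro j j' hjj x hx y hy
      have hmem : (x, y) ∈ T := by
        rw [hT]
        exact Set.mem_biUnion (show (j, j') ∈ {p : Fin D.k × Fin D.k | p.1 ≠ p.2} from hjj)
          (Set.mk_mem_prod hx hy)
      exact hmin hmem

/-- separation of a cylinder from the rest of the set -/
lemma sep_compl {γ : ℝ} (hγ0 : 0 < γ)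
    (hγ : ∀ (j j' : Fin D.k), j ≠ j' →
      ∀ x ∈ D.φ j '' D.S, ∀ y ∈ D.φ j' '' D.S, γ ≤ dist x y) :
    ∀ (i : List (Fin D.k)), ∀ x ∈ D.cyl i, ∀ y ∈ D.S, y ∉ D.cyl i →
      γ * D.pr i ≤ dist x y := by
  intro i
  induction i with
  | nil => intro x hx y hy hyn; rw [cyl_nil] at hyn; exact absurd hy hyn
  | cons u i ih =>
    intro x hx y hy hyn
    rw [D.hunion] at hy
    obtain ⟨a, ha⟩ := Set.mem_iUnion.mp hy
    rcases eq_or_ne a u with rfl | hau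
    · obtain ⟨ya, hya, rfl⟩ := ha
      rw [cyl_cons] at hx hyn
      obtain ⟨xa, hxa, rfl⟩ := hx
      have hyan : ya ∉ D.cyl i := fun hc => hyn (Set.mem_image_of_mem _ hc)
      have hrec := ih xa hxa ya hya hyan
      rw [D.hsim a, pr_cons]
      calc γ * (D.σ a * D.pr i) = D.σ a * (γ * D.pr i) := by ring
        _ ≤ D.σ a * dist xa ya := mul_le_mul_of_nonneg_left hrec (le_of_lt (D.hσ0 a))
    · have hxu : x ∈ D.φ u '' D.S := by
        rw [cyl_cons] at hx
        exact (Set.image_mono (cyl_sub D i)) hx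
      have := hγ u a (Ne.symm hau) x hxu y ha
      calc γ * D.pr (u :: i) ≤ γ * 1 :=
            mul_le_mul_of_nonneg_left (pr_le_one D _) (le_of_lt hγ0)
        _ = γ := mul_one _
        _ ≤ dist x y := this

/-- gap between distinct children of a cylinder -/
lemma child_gap {γ : ℝ}
    (hγ : ∀ (j j' : Fin D.k), j ≠ j' →
      ∀ x ∈ D.φ j '' D.S, ∀ y ∈ D.φ j' '' D.S, γ ≤ dist x y)
    {i : List (Fin D.k)} {a a' : Fin D.k} (haa : a ≠ a')
    {x y : X} (hx : x ∈ D.cyl (i ++ [a])) (hy : y ∈ D.cyl (i ++ [a'])) :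
    γ * D.pr i ≤ dist x y := by
  rw [cyl_append] at hx hy
  obtain ⟨xa, hxa, rfl⟩ := hx
  obtain ⟨ya, hya, rfl⟩ := hy
  rw [dist_Φ]
  have hxa' : xa ∈ D.φ a '' D.S := by rwa [cyl_cons, cyl_nil] at hxa
  have hya' : ya ∈ D.φ a' '' D.S := by rwa [cyl_cons, cyl_nil] at hya
  calc γ * D.pr i = D.pr i * γ := by ring
    _ ≤ D.pr i * dist xa ya :=
        mul_le_mul_of_nonneg_left (hγ a a' haa xa hxa' ya hya') (le_of_lt (pr_pos D i))

/-- cylinders which meet have comparable words -/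
lemma comparable_of_not_disjoint :
    ∀ (i i' : List (Fin D.k)), ¬ Disjoint (D.cyl i) (D.cyl i') → i <+: i' ∨ i' <+: i := by
  intro i
  induction i with
  | nil => intro i' _; exact Or.inl (nil_prefix)
  | cons u i ih =>
    intro i' hnd
    cases i' with
    | nil => exact Or.inr (nil_prefix)
    | cons u' i'' =>
      rcases eq_or_ne u u' with rfl | huu
      · rw [cyl_cons, cyl_cons] at hnd
        have hnd' : ¬ Disjoint (D.cyl i) (D.cyl i'') := by
          intro hd
          exact hnd (Set.disjoint_image_of_injective (φ_inj D u) hd)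
        rcases ih i'' hnd' with h | h
        · exact Or.inl (List.cons_prefix_cons.mpr ⟨rfl, h⟩)
        · exact Or.inr (List.cons_prefix_cons.mpr ⟨rfl, h⟩)
      · exfalso
        apply hnd
        have h1 : D.cyl (u :: i) ⊆ D.φ u '' D.S := by
          rw [cyl_cons]; exact Set.image_mono (cyl_sub D i)
        have h2 : D.cyl (u' :: i'') ⊆ D.φ u' '' D.S := by
          rw [cyl_cons]; exact Set.image_mono (cyl_sub D i'')
        exact (D.hdisj huu).mono h1 h2

/-- distinct children are disjoint -/
lemma disjoint_children {i : List (Fin D.k)} {u u' : Fin D.k} (h : u ≠ u') :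
    Disjoint (D.cyl (i ++ [u])) (D.cyl (i ++ [u'])) := by
  by_contra hnd
  rcases comparable_of_not_disjoint D _ _ hnd with hc | hc
  · have h2 := List.append_cancel_left (hc.eq_of_length (by simp))
    exact h (by simpa using h2)
  · have h2 := List.append_cancel_left (hc.eq_of_length (by simp))
    exact h (by simpa using h2.symm)

lemma cyl_eq_iUnion (i : List (Fin D.k)) :
    D.cyl i = ⋃ u, D.cyl (i ++ [u]) := by
  have h1 : D.cyl i = D.Φ i '' D.S := rfl
  conv_lhs => rw [h1, D.hunion]
  rw [Set.image_iUnion]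
  exact Set.iUnion_congr fun u => by rw [cyl_append, cyl_cons, cyl_nil]

lemma dist_le_of_mem_cyl {Dm : ℝ} (hDm : ∀ a ∈ D.S, ∀ b ∈ D.S, dist a b ≤ Dm)
    {i : List (Fin D.k)} {x y : X} (hx : x ∈ D.cyl i) (hy : y ∈ D.cyl i) :
    dist x y ≤ D.pr i * Dm := by
  obtain ⟨xa, hxa, rfl⟩ := hx
  obtain ⟨ya, hya, rfl⟩ := hy
  rw [dist_Φ]
  exact mul_le_mul_of_nonneg_left (hDm _ hxa _ hya) (le_of_lt (pr_pos D i))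

/-- existence of two far-apart points inside any cylinder -/
lemma exists_far_pair (h2 : 2 ≤ D.k) {γ : ℝ}
    (hγ : ∀ (j j' : Fin D.k), j ≠ j' →
      ∀ x ∈ D.φ j '' D.S, ∀ y ∈ D.φ j' '' D.S, γ ≤ dist x y)
    (i : List (Fin D.k)) :
    ∃ a ∈ D.cyl i, ∃ b ∈ D.cyl i, γ * D.pr i ≤ dist a b := by
  have h0 : (0 : ℕ) < D.k := by omega
  have h1 : (1 : ℕ) < D.k := by omega
  set u₀ : Fin D.k := ⟨0, h0⟩
  set u₁ : Fin D.k := ⟨1, h1⟩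
  have hne01 : u₀ ≠ u₁ := by
    intro h; simpa [u₀, u₁, Fin.ext_iff] using h
  obtain ⟨s₀, hs₀⟩ := D.hne
  refine ⟨D.Φ i (D.φ u₀ s₀), ?_, D.Φ i (D.φ u₁ s₀), ?_, ?_⟩
  · exact cyl_mono D ⟨[u₀], rfl⟩ (by
      rw [cyl_append, cyl_cons, cyl_nil]
      exact Set.mem_image_of_mem _ (Set.mem_image_of_mem _ hs₀))
  · exact cyl_mono D ⟨[u₁], rfl⟩ (by
      rw [cyl_append, cyl_cons, cyl_nil]
      exact Set.mem_image_of_mem _ (Set.mem_image_of_mem _ hs₀))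
  · rw [dist_Φ]
    have := hγ u₀ u₁ hne01 (D.φ u₀ s₀) (Set.mem_image_of_mem _ hs₀)
      (D.φ u₁ s₀) (Set.mem_image_of_mem _ hs₀)
    calc γ * D.pr i = D.pr i * γ := by ring
      _ ≤ D.pr i * dist (D.φ u₀ s₀) (D.φ u₁ s₀) :=
          mul_le_mul_of_nonneg_left this (le_of_lt (pr_pos D i))

/-- maximal contraction ratio -/
def σmax : ℝ := Finset.univ.sup' ⟨⟨0, D.k_pos⟩, Finset.mem_univ _⟩ D.σ

/-- minimal contraction ratio -/
def σmin : ℝ := Finset.univ.inf' ⟨⟨0, D.k_pos⟩, Finset.mem_univ _⟩ D.σ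

lemma le_σmax (j : Fin D.k) : D.σ j ≤ D.σmax := Finset.le_sup' D.σ (Finset.mem_univ j)

lemma σmin_le (j : Fin D.k) : D.σmin ≤ D.σ j := Finset.inf'_le D.σ (Finset.mem_univ j)

lemma σmax_lt_one : D.σmax < 1 := by
  obtain ⟨j, -, hj⟩ := Finset.exists_mem_eq_sup'
    (⟨⟨0, D.k_pos⟩, Finset.mem_univ _⟩ : (Finset.univ : Finset (Fin D.k)).Nonempty) D.σ
  rw [σmax, hj]; exact D.hσ1 j

lemma σmax_pos : 0 < D.σmax :=
  lt_of_lt_of_le (D.hσ0 ⟨0, D.k_pos⟩) (le_σmax D _)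

lemma σmin_pos : 0 < D.σmin := by
  obtain ⟨j, -, hj⟩ := Finset.exists_mem_eq_inf'
    (⟨⟨0, D.k_pos⟩, Finset.mem_univ _⟩ : (Finset.univ : Finset (Fin D.k)).Nonempty) D.σ
  rw [σmin, hj]; exact D.hσ0 j

lemma σmin_lt_one : D.σmin < 1 :=
  lt_of_le_of_lt (σmin_le D ⟨0, D.k_pos⟩) (D.hσ1 _)

lemma pr_le_pow (i : List (Fin D.k)) : D.pr i ≤ D.σmax ^ i.length := by
  induction i with
  | nil => simp
  | cons u i ih =>
    rw [pr_cons, List.length_cons, pow_succ]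
    rw [mul_comm (D.σmax ^ i.length) D.σmax]
    exact mul_le_mul (le_σmax D u) ih (le_of_lt (pr_pos D i)) (le_of_lt (σmax_pos D))

/-- the cut set at scale `r`: minimal words with product `≤ r` -/
def cut (r : ℝ) : Set (List (Fin D.k)) :=
  {i | D.pr i ≤ r ∧ ∀ j, j <+: i → j ≠ i → r < D.pr j}

lemma exists_word_len : ∀ (N : ℕ), ∀ x ∈ D.S, ∃ i, i.length = N ∧ x ∈ D.cyl i := by
  intro N
  induction N with
  | zero => intro x hx; exact ⟨[], rfl, by simpa using hx⟩
  | succ N ih =>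
    intro x hx
    rw [D.hunion] at hx
    obtain ⟨u, hu⟩ := Set.mem_iUnion.mp hx
    obtain ⟨y, hy, rfl⟩ := hu
    obtain ⟨i, hlen, hyc⟩ := ih y hy
    refine ⟨u :: i, by simp [hlen], ?_⟩
    rw [cyl_cons]
    exact Set.mem_image_of_mem _ hyc

lemma cut_cover {r : ℝ} (hr : 0 < r) : ∀ x ∈ D.S, ∃ i ∈ D.cut r, x ∈ D.cyl i := by
  intro x hx
  obtain ⟨N, hN⟩ := exists_pow_lt_of_lt_one hr (σmax_lt_one D)
  obtain ⟨i, hlen, hxc⟩ := exists_word_len D N x hx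
  have hPN : D.pr (i.take N) ≤ r := by
    rw [List.take_of_length_le (le_of_eq hlen)]
    exact le_of_lt (lt_of_le_of_lt (pr_le_pow D i) (by rw [hlen]; exact hN))
  classical
  have hex : ∃ t, D.pr (i.take t) ≤ r := ⟨N, hPN⟩
  set t₀ := Nat.find hex with ht₀
  refine ⟨i.take t₀, ⟨Nat.find_spec hex, ?_⟩, ?_⟩
  · intro j hj hjne
    have hjlen : j.length < (i.take t₀).length := by
      rcases lt_or_eq_of_le hj.length_le with h | h
      · exact h
      · exact absurd (hj.eq_of_length h) hjne
    have hjt : j <+: i := hj.trans (List.take_prefix t₀ i)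
    have hjeq : j = i.take j.length := List.prefix_iff_eq_take.mp hjt
    have hlt : j.length < t₀ := lt_of_lt_of_le hjlen (by
      rw [List.length_take]; exact min_le_left _ _)
    have := Nat.find_min hex hlt
    rw [← hjeq] at this
    exact lt_of_not_ge this
  · exact cyl_mono D (List.take_prefix t₀ i) hxc

lemma cut_incomp {r : ℝ} {i i' : List (Fin D.k)} (hi : i ∈ D.cut r) (hi' : i' ∈ D.cut r)
    (hne : i ≠ i') : ¬ (i <+: i') := by
  intro hpre
  exact absurd hi.1 (not_le_of_gt (hi'.2 i hpre hne))

lemma cut_disjoint {r : ℝ} {i i' : List (Fin D.k)} (hi : i ∈ D.cut r) (hi' : i' ∈ D.cut r)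
    (hne : i ≠ i') : Disjoint (D.cyl i) (D.cyl i') := by
  by_contra hnd
  rcases comparable_of_not_disjoint D _ _ hnd with h | h
  · exact cut_incomp D hi hi' hne h
  · exact cut_incomp D hi' hi (Ne.symm hne) h

lemma cut_nil_not {r : ℝ} (hr : r < 1) : ([] : List (Fin D.k)) ∉ D.cut r := by
  intro h
  have := h.1
  rw [pr_nil] at this
  linarith

lemma cut_ne_nil {r : ℝ} (hr : r < 1) {i : List (Fin D.k)} (hi : i ∈ D.cut r) : i ≠ [] := by
  intro h; rw [h] at hi; exact cut_nil_not D hr hi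

lemma cut_lower {r : ℝ} {i : List (Fin D.k)} (hi : i ∈ D.cut r) (hne : i ≠ []) :
    D.σmin * r < D.pr i := by
  have hdl : i.dropLast ≠ i := by
    intro h
    have h2 := congrArg List.length h
    rw [List.length_dropLast] at h2
    have hpos := List.length_pos_iff.mpr hne
    omega
  have h1 : r < D.pr i.dropLast := hi.2 _ (List.dropLast_prefix i) hdl
  have h2 : D.pr i = D.pr i.dropLast * D.σ (i.getLast hne) := by
    conv_lhs => rw [← List.dropLast_append_getLast hne]
    rw [pr_append, pr_cons, pr_nil, mul_one]
  rw [h2]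
  calc D.σmin * r ≤ D.σ (i.getLast hne) * r :=
        mul_le_mul_of_nonneg_right (σmin_le D _) (by
          rcases hi with ⟨h3, -⟩
          nlinarith [pr_pos D i])
    _ < D.σ (i.getLast hne) * D.pr i.dropLast :=
        (mul_lt_mul_iff_right₀ (D.hσ0 _)).mpr h1
    _ = D.pr i.dropLast * D.σ (i.getLast hne) := mul_comm _ _

lemma cut_finite {r : ℝ} (hr : 0 < r) : (D.cut r).Finite := by
  obtain ⟨N, hN⟩ := exists_pow_lt_of_lt_one hr (σmax_lt_one D)
  apply Set.Finite.subset (List.finite_length_le (Fin D.k) N)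
  intro i hi
  simp only [Set.mem_setOf_eq]
  by_contra hlen
  push_neg at hlen
  have htne : i.take N ≠ i := by
    intro h
    have := congrArg List.length h
    rw [List.length_take] at this
    omega
  have h1 : r < D.pr (i.take N) := hi.2 _ (List.take_prefix N i) htne
  have h2 : D.pr (i.take N) ≤ D.σmax ^ N := by
    have := pr_le_pow D (i.take N)
    rwa [List.length_take, min_eq_left (by omega)] at this
  linarith

/-- the finset of all words of a given length -/
def wordsOf : ℕ → Finset (List (Fin D.k))
  | 0 => {[]}
  | (t + 1) => Finset.univ.biUnion fun u => (wordsOf t).image (List.cons u)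

lemma mem_wordsOf {t : ℕ} {i : List (Fin D.k)} : i ∈ D.wordsOf t ↔ i.length = t := by
  induction t generalizing i with
  | zero => simp [wordsOf, List.length_eq_zero_iff]
  | succ t ih =>
    simp only [wordsOf, Finset.mem_biUnion, Finset.mem_univ, true_and, Finset.mem_image]
    constructor
    · rintro ⟨u, a, ha, rfl⟩
      simp [ih.mp ha]
    · intro h
      cases i with
      | nil => simp at h
      | cons u a =>
        exact ⟨u, a, ih.mpr (by simpa using h), rfl⟩

section RpowSums

variable {s : ℝ}

lemma sum_wordsOf (hs : 0 < s) (hsum : ∑ u, D.σ u ^ s = 1) (t : ℕ) :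
    ∑ i ∈ D.wordsOf t, D.pr i ^ s = 1 := by
  induction t with
  | zero => simp [wordsOf]
  | succ t ih =>
    rw [wordsOf, Finset.sum_biUnion]
    · have : ∀ u : Fin D.k, ∑ i ∈ (D.wordsOf t).image (List.cons u), D.pr i ^ s
          = D.σ u ^ s := by
        intro u
        rw [Finset.sum_image (by intro a _ b _ h; exact (List.cons.injEq _ _ _ _ ▸ h).2)]
        have : ∀ a ∈ D.wordsOf t, D.pr (u :: a) ^ s = D.σ u ^ s * D.pr a ^ s := by
          intro a _
          rw [pr_cons, Real.mul_rpow (le_of_lt (D.hσ0 u)) (le_of_lt (pr_pos D a))]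
        rw [Finset.sum_congr rfl this, ← Finset.mul_sum, ih, mul_one]
      rw [Finset.sum_congr rfl (fun u _ => this u), hsum]
    · intro a _ b _ hab
      apply Finset.disjoint_left.mpr
      intro x hxa hxb
      obtain ⟨la, -, rfl⟩ := Finset.mem_image.mp hxa
      obtain ⟨lb, -, hlb⟩ := Finset.mem_image.mp hxb
      exact hab (by simpa using (List.cons.injEq _ _ _ _ ▸ hlb.symm).1)

lemma sum_words_append (hs : 0 < s) (hsum : ∑ u, D.σ u ^ s = 1) (j : List (Fin D.k)) (t : ℕ) :
    ∑ w ∈ D.wordsOf t, D.pr (j ++ w) ^ s = D.pr j ^ s := by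
  have : ∀ w ∈ D.wordsOf t, D.pr (j ++ w) ^ s = D.pr j ^ s * D.pr w ^ s := by
    intro w _
    rw [pr_append, Real.mul_rpow (le_of_lt (pr_pos D j)) (le_of_lt (pr_pos D w))]
  rw [Finset.sum_congr rfl this, ← Finset.mul_sum, sum_wordsOf D hs hsum, mul_one]

/-- key invariance: any two finite disjoint cylinder decompositions of the same
set have the same `s`-mass. -/
lemma partition_sum (hs : 0 < s) (hsum : ∑ u, D.σ u ^ s = 1)
    {J J' : Finset (List (Fin D.k))}
    (hd : (↑J : Set (List (Fin D.k))).Pairwise fun a b => Disjoint (D.cyl a) (D.cyl b))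
    (hd' : (↑J' : Set (List (Fin D.k))).Pairwise fun a b => Disjoint (D.cyl a) (D.cyl b))
    (hU : (⋃ j ∈ J, D.cyl j) = ⋃ j ∈ J', D.cyl j) :
    ∑ j ∈ J, D.pr j ^ s = ∑ j ∈ J', D.pr j ^ s := by
  classical
  set K := (J ∪ J').sup List.length with hK
  have hKJ : ∀ j ∈ J, j.length ≤ K :=
    fun j hj => Finset.le_sup (Finset.mem_union_left _ hj)
  have hKJ' : ∀ j ∈ J', j.length ≤ K :=
    fun j hj => Finset.le_sup (Finset.mem_union_right _ hj)
  have main : ∀ (T : Finset (List (Fin D.k))),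
      (↑T : Set (List (Fin D.k))).Pairwise (fun a b => Disjoint (D.cyl a) (D.cyl b)) →
      (∀ j ∈ T, j.length ≤ K) →
      ∑ j ∈ T, D.pr j ^ s =
        ∑ w ∈ (D.wordsOf K).filter (fun w => D.cyl w ⊆ ⋃ j ∈ T, D.cyl j), D.pr w ^ s := by
    intro T hdT hKT
    have hset : (D.wordsOf K).filter (fun w => D.cyl w ⊆ ⋃ j ∈ T, D.cyl j)
        = T.biUnion (fun j => (D.wordsOf K).filter (fun w => j <+: w)) := by
      ext w
      simp only [Finset.mem_filter, Finset.mem_biUnion, mem_wordsOf]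
      constructor
      · rintro ⟨hwK, hsub⟩
        obtain ⟨x, hx⟩ := cyl_ne D w
        obtain ⟨j, hj, hxj⟩ := Set.mem_iUnion₂.mp (hsub hx)
        refine ⟨j, hj, hwK, ?_⟩
        rcases comparable_of_not_disjoint D w j
          (Set.not_disjoint_iff.mpr ⟨x, hx, hxj⟩) with h | h
        · have : w = j := h.eq_of_length (le_antisymm h.length_le (by rw [hwK]; exact hKT j hj))
          rw [this]
        · exact h
      · rintro ⟨j, hj, hwK, hpre⟩
        refine ⟨hwK, ?_⟩
        intro x hx
        exact Set.mem_iUnion₂.mpr ⟨j, hj, cyl_mono D hpre hx⟩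
    rw [hset, Finset.sum_biUnion]
    · apply Finset.sum_congr rfl
      intro j hj
      have himg : (D.wordsOf K).filter (fun w => j <+: w)
          = (D.wordsOf (K - j.length)).image (fun v => j ++ v) := by
        ext w
        simp only [Finset.mem_filter, Finset.mem_image, mem_wordsOf]
        constructor
        · rintro ⟨hwK, t, rfl⟩
          refine ⟨t, ?_, rfl⟩
          rw [List.length_append] at hwK
          omega
        · rintro ⟨v, hv, rfl⟩
          have hjK := hKT j hj
          constructor
          · rw [List.length_append]; omega
          · exact List.prefix_append j v
      rw [himg, Finset.sum_image (by
        intro a _ b _ h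
        exact List.append_cancel_left h)]
      exact (sum_words_append D hs hsum j _).symm
    · intro a ha b hb hab
      apply Finset.disjoint_left.mpr
      intro w hwa hwb
      simp only [Finset.mem_filter] at hwa hwb
      rcases List.prefix_or_prefix_of_prefix hwa.2 hwb.2 with h | h
      · exact hab (hdT.eq ha hb (fun hdis =>
          (Set.not_disjoint_iff.mpr
            (by
              obtain ⟨x, hx⟩ := cyl_ne D b
              exact ⟨x, cyl_mono D h hx, hx⟩)) hdis))
      · exact hab (hdT.eq ha hb (fun hdis =>
          (Set.not_disjoint_iff.mpr
            (by
              obtain ⟨x, hx⟩ := cyl_ne D a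
              exact ⟨x, hx, cyl_mono D h hx⟩)) hdis))
  rw [main J hd hKJ, main J' hd' hKJ', hU]

end RpowSums

end DustSys






lemma rpow_base_inj {x y s : ℝ} (hx : 0 < x) (hy : 0 < y) (hs : 0 < s)
    (h : x ^ s = y ^ s) : x = y := by
  rcases lt_trichotomy x y with hlt | heq | hlt
  · exact absurd h (ne_of_lt (Real.rpow_lt_rpow (le_of_lt hx) hlt hs))
  · exact heq
  · exact absurd h.symm (ne_of_lt (Real.rpow_lt_rpow (le_of_lt hy) hlt hs))

lemma rpow_pow_comm {x : ℝ} (hx : 0 ≤ x) (s : ℝ) (t : ℕ) :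
    (x ^ t) ^ s = (x ^ s) ^ t := by
  rw [← Real.rpow_natCast x t, ← Real.rpow_mul hx, mul_comm, Real.rpow_mul hx,
    Real.rpow_natCast]

lemma prod_map_mem_closure {n : ℕ} (τ : Fin n → ℝ) :
    ∀ {v : List (Fin n)}, v ≠ [] →
      (v.map τ).prod ∈ Subsemigroup.closure (Set.range τ) := by
  intro v
  induction v with
  | nil => intro h; exact absurd rfl h
  | cons a v ih =>
    intro _
    cases v with
    | nil =>
      simp only [List.map_cons, List.map_nil, List.prod_cons, List.prod_nil, mul_one]
      exact Subsemigroup.subset_closure ⟨a, rfl⟩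
    | cons b w =>
      rw [List.map_cons, List.prod_cons]
      exact Subsemigroup.mul_mem _ (Subsemigroup.subset_closure ⟨a, rfl⟩)
        (ih (List.cons_ne_nil b w))

lemma squeeze_pair {a b W : ℝ} (ha : 0 < a) (hb : 0 < b) (hW : 0 < W)
    (h : ∀ ξ : ℝ, 0 < ξ → ∃ η : ℝ, 0 < η ∧ η ≤ ξ ∧
      b * (W - η) ≤ a * W ∧ a * (W - η) ≤ b * W) : a = b := by
  apply eq_of_all_near hb
  intro ζ hζ
  have hζ1 : (0:ℝ) < 1 + ζ := by linarith
  have hξ0 : 0 < min (ζ*W/(1+ζ)) (W/2) := by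
    apply lt_min
    · exact div_pos (mul_pos hζ hW) hζ1
    · linarith
  obtain ⟨η, hη0, hηle, h1, h2⟩ := h _ hξ0
  have hη1 : η ≤ ζ*W/(1+ζ) := le_trans hηle (min_le_left _ _)
  have hη3 : η * (1+ζ) ≤ ζ*W := by
    rw [← le_div_iff₀ hζ1]
    exact hη1
  have hηζW : η ≤ ζ*W := by nlinarith
  constructor
  · have hstep : b*(1-ζ)*W ≤ a*W := by
      nlinarith [mul_le_mul_of_nonneg_left hηζW hb.le]
    exact le_of_mul_le_mul_right hstep hW
  · have hstep : a*W ≤ b*(1+ζ)*W := by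
      nlinarith [mul_le_mul_of_nonneg_left hη3 ha.le,
        mul_le_mul_of_nonneg_right h2 (le_of_lt hζ1)]
    exact le_of_mul_le_mul_right hstep hW

namespace DustSys

variable {X : Type*} [MetricSpace X] (D : DustSys X)

lemma pr_replicate (u : Fin D.k) (t : ℕ) : D.pr (List.replicate t u) = D.σ u ^ t := by
  induction t with
  | zero => simp
  | succ t ih => rw [List.replicate_succ, pr_cons, ih, pow_succ]; ring

lemma pr_rpow_eq_prod (s : ℝ) (v : List (Fin D.k)) :
    D.pr v ^ s = (v.map (fun j => D.σ j ^ s)).prod := by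
  induction v with
  | nil => simp
  | cons a v ih =>
    rw [pr_cons, Real.mul_rpow (le_of_lt (D.hσ0 a)) (le_of_lt (pr_pos D v)),
      List.map_cons, List.prod_cons, ih]

/-- all words of length at most `c` -/
def wordsLE (c : ℕ) : Finset (List (Fin D.k)) :=
  (Finset.range (c+1)).biUnion (fun t => D.wordsOf t)

lemma mem_wordsLE {c : ℕ} {i : List (Fin D.k)} : i ∈ D.wordsLE c ↔ i.length ≤ c := by
  simp only [wordsLE, Finset.mem_biUnion, Finset.mem_range, mem_wordsOf]
  constructor
  · rintro ⟨t, ht, rfl⟩; omega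
  · intro h; exact ⟨i.length, by omega, rfl⟩

lemma two_le_k {s : ℝ} (hs : 0 < s) (hsum : ∑ u, D.σ u ^ s = 1) : 2 ≤ D.k := by
  by_contra hcon
  push_neg at hcon
  have h1 := D.k_pos
  have hk1 : D.k = 1 := by omega
  have : ∑ u, D.σ u ^ s < 1 := by
    have hcard : Fintype.card (Fin D.k) = 1 := by simp [hk1]
    obtain ⟨u₀, hu₀⟩ := Fintype.card_eq_one_iff.mp hcard
    have : (Finset.univ : Finset (Fin D.k)) = {u₀} := by
      ext u; simp [hu₀ u]
    rw [this, Finset.sum_singleton]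
    exact Real.rpow_lt_one (le_of_lt (D.hσ0 u₀)) (D.hσ1 u₀) hs
  rw [hsum] at this
  exact lt_irrefl 1 this

end DustSys

section Key

variable {X : Type*} [MetricSpace X]

lemma key (DE DF : DustSys X) {s C : ℝ} (hs : 0 < s) (hC : 0 < C)
    (hρs : ∑ u, DE.σ u ^ s = 1) (hτs : ∑ u, DF.σ u ^ s = 1)
    {f : X → X} (hbij : Set.BijOn f DE.S DF.S)
    (hlip : ∀ x ∈ DE.S, ∀ y ∈ DE.S,
      C⁻¹ * dist x y ≤ dist (f x) (f y) ∧ dist (f x) (f y) ≤ C * dist x y) :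
    (∀ u, DE.σ u ^ s ∈ Subfield.closure (Set.range fun j => DF.σ j ^ s)) ∧
    (∀ u, ∃ g : ℕ, 0 < g ∧
      DE.σ u ^ g ∈ Subsemigroup.closure (Set.range fun j => DF.σ j)) := by
  classical
  -- basic facts
  have hk2 : 2 ≤ DE.k := DE.two_le_k hs hρs
  obtain ⟨γE, hγE0, hγE⟩ := DE.exists_gap
  obtain ⟨γF, hγF0, hγF⟩ := DF.exists_gap
  obtain ⟨DmE0, hDmE0⟩ := Metric.isBounded_iff.mp DE.hcomp.isBounded
  obtain ⟨DmF0, hDmF0⟩ := Metric.isBounded_iff.mp DF.hcomp.isBounded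
  set DmE := max DmE0 1 with hDmEdef
  set DmF := max DmF0 1 with hDmFdef
  have hDmE1 : (1:ℝ) ≤ DmE := le_max_right _ _
  have hDmF1 : (1:ℝ) ≤ DmF := le_max_right _ _
  have hDmE0' : (0:ℝ) < DmE := lt_of_lt_of_le one_pos hDmE1
  have hDmF0' : (0:ℝ) < DmF := lt_of_lt_of_le one_pos hDmF1
  have hDmE : ∀ a ∈ DE.S, ∀ b ∈ DE.S, dist a b ≤ DmE :=
    fun a ha b hb => le_trans (hDmE0 ha hb) (le_max_left _ _)
  have hDmF : ∀ a ∈ DF.S, ∀ b ∈ DF.S, dist a b ≤ DmF :=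
    fun a ha b hb => le_trans (hDmF0 ha hb) (le_max_left _ _)
  set C₁ := max C 1 with hC₁def
  have hC₁1 : (1:ℝ) ≤ C₁ := le_max_right _ _
  have hC₁0 : (0:ℝ) < C₁ := lt_of_lt_of_le one_pos hC₁1
  have hlow : ∀ x ∈ DE.S, ∀ y ∈ DE.S, C₁⁻¹ * dist x y ≤ dist (f x) (f y) := by
    intro x hx y hy
    refine le_trans ?_ (hlip x hx y hy).1
    apply mul_le_mul_of_nonneg_right _ dist_nonneg
    exact inv_anti₀ hC (le_max_left _ _)
  have hup : ∀ x ∈ DE.S, ∀ y ∈ DE.S, dist (f x) (f y) ≤ C₁ * dist x y := by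
    intro x hx y hy
    refine le_trans (hlip x hx y hy).2 ?_
    exact mul_le_mul_of_nonneg_right (le_max_left _ _) dist_nonneg
  -- the scale constant ε
  set ε := min (1/2) (γE / (C₁ * 2 * (DmF + 1))) with hεdef
  have hε0 : 0 < ε := by
    apply lt_min (by norm_num)
    apply div_pos hγE0
    positivity
  have hε1 : ε < 1 := lt_of_le_of_lt (min_le_left _ _) (by norm_num)
  have hεkey : ε * DmF < C₁⁻¹ * γE := by
    have h1 : ε ≤ γE / (C₁ * 2 * (DmF + 1)) := min_le_right _ _
    rw [inv_mul_eq_div, lt_div_iff₀ hC₁0]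
    calc ε * DmF * C₁ ≤ γE / (C₁ * 2 * (DmF + 1)) * DmF * C₁ := by
          apply mul_le_mul_of_nonneg_right _ (le_of_lt hC₁0)
          exact mul_le_mul_of_nonneg_right h1 (le_of_lt hDmF0')
      _ < γE := by
          rw [div_mul_eq_mul_div, div_mul_eq_mul_div, div_lt_iff₀ (by positivity)]
          nlinarith [mul_pos hγE0 hC₁0, mul_pos (mul_pos hγE0 hC₁0) hDmF0']
  -- the scale of the cut set at a word i
  have hsc0 : ∀ i : List (Fin DE.k), 0 < ε * DE.pr i :=
    fun i => mul_pos hε0 (DustSys.pr_pos DE i)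
  have hsc1 : ∀ i : List (Fin DE.k), ε * DE.pr i < 1 := by
    intro i
    calc ε * DE.pr i ≤ ε * 1 :=
          mul_le_mul_of_nonneg_left (DustSys.pr_le_one DE i) (le_of_lt hε0)
      _ = ε := mul_one _
      _ < 1 := hε1
  -- the pieces of the image of a cylinder
  have hJfin : ∀ i : List (Fin DE.k),
      {j | j ∈ DF.cut (ε * DE.pr i) ∧ (DF.cyl j ∩ (f '' DE.cyl i)).Nonempty}.Finite :=
    fun i => (DF.cut_finite (hsc0 i)).subset (fun j hj => hj.1)
  set J : List (Fin DE.k) → Finset (List (Fin DF.k)) := fun i => (hJfin i).toFinset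
    with hJdef
  have hmemJ : ∀ (i : List (Fin DE.k)) (j : List (Fin DF.k)),
      j ∈ J i ↔ (j ∈ DF.cut (ε * DE.pr i) ∧ (DF.cyl j ∩ (f '' DE.cyl i)).Nonempty) :=
    fun i j => (hJfin i).mem_toFinset
  -- image of a cylinder is inside F
  have himg : ∀ i : List (Fin DE.k), f '' DE.cyl i ⊆ DF.S := by
    intro i
    rw [← hbij.image_eq]
    exact Set.image_mono (f := f) (DustSys.cyl_sub DE i)
  -- separation of the image of a cylinder from its complement
  have hsep : ∀ i : List (Fin DE.k), ∀ z ∈ f '' DE.cyl i, ∀ y ∈ DF.S,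
      y ∉ f '' DE.cyl i → C₁⁻¹ * (γE * DE.pr i) ≤ dist z y := by
    intro i z hz y hy hyn
    obtain ⟨a, ha, rfl⟩ := hz
    have hyF : y ∈ f '' DE.S := by rw [hbij.image_eq]; exact hy
    obtain ⟨b, hb, rfl⟩ := hyF
    have hbn : b ∉ DE.cyl i := fun hc => hyn (Set.mem_image_of_mem f hc)
    have h1 : γE * DE.pr i ≤ dist a b :=
      DustSys.sep_compl DE hγE0 hγE i a ha b hb hbn
    calc C₁⁻¹ * (γE * DE.pr i) ≤ C₁⁻¹ * dist a b := by
          apply mul_le_mul_of_nonneg_left h1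
          positivity
      _ ≤ dist (f a) (f b) := hlow a (DustSys.cyl_sub DE i ha) b hb
  -- each piece is contained in the image
  have hJsub : ∀ i : List (Fin DE.k), ∀ j ∈ J i, DF.cyl j ⊆ f '' DE.cyl i := by
    intro i j hj
    obtain ⟨hcut, z, hz⟩ := (hmemJ i j).mp hj
    intro y hy
    by_contra hyn
    have hzj : z ∈ DF.cyl j := hz.1
    have hzi : z ∈ f '' DE.cyl i := hz.2
    have hyF : y ∈ DF.S := DustSys.cyl_sub DF j hy
    have h1 : C₁⁻¹ * (γE * DE.pr i) ≤ dist z y := hsep i z hzi y hyF hyn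
    have h2 : dist z y ≤ DF.pr j * DmF :=
      DustSys.dist_le_of_mem_cyl DF hDmF hzj hy
    have h3 : DF.pr j ≤ ε * DE.pr i := hcut.1
    have h4 : DF.pr j * DmF ≤ ε * DE.pr i * DmF :=
      mul_le_mul_of_nonneg_right h3 (le_of_lt hDmF0')
    have h5 : ε * DE.pr i * DmF < C₁⁻¹ * γE * DE.pr i := by
      have := mul_lt_mul_of_pos_right hεkey (DustSys.pr_pos DE i)
      calc ε * DE.pr i * DmF = ε * DmF * DE.pr i := by ring
        _ < C₁⁻¹ * γE * DE.pr i := this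
    have : C₁⁻¹ * (γE * DE.pr i) < C₁⁻¹ * (γE * DE.pr i) := by
      calc C₁⁻¹ * (γE * DE.pr i) ≤ dist z y := h1
        _ ≤ DF.pr j * DmF := h2
        _ ≤ ε * DE.pr i * DmF := h4
        _ < C₁⁻¹ * γE * DE.pr i := h5
        _ = C₁⁻¹ * (γE * DE.pr i) := by ring
    exact lt_irrefl _ this
  -- the pieces cover the image
  have hcov : ∀ i : List (Fin DE.k), f '' DE.cyl i = ⋃ j ∈ J i, DF.cyl j := by
    intro i
    apply Set.Subset.antisymm
    · intro x hx
      have hxF : x ∈ DF.S := himg i hx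
      obtain ⟨j, hjc, hjx⟩ := DF.cut_cover (hsc0 i) x hxF
      have hjJ : j ∈ J i := (hmemJ i j).mpr ⟨hjc, ⟨x, hjx, hx⟩⟩
      exact Set.mem_iUnion₂.mpr ⟨j, hjJ, hjx⟩
    · intro x hx
      obtain ⟨j, hj, hxj⟩ := Set.mem_iUnion₂.mp hx
      exact hJsub i j hj hxj
  have hJne : ∀ i : List (Fin DE.k), (J i).Nonempty := by
    intro i
    obtain ⟨x, hx⟩ := (DustSys.cyl_ne DE i).image f
    have := hcov i ▸ hx
    obtain ⟨j, hj, -⟩ := Set.mem_iUnion₂.mp this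
    exact ⟨j, hj⟩
  have hJdisj : ∀ i : List (Fin DE.k),
      (↑(J i) : Set (List (Fin DF.k))).Pairwise fun a b => Disjoint (DF.cyl a) (DF.cyl b) := by
    intro i a ha b hb hab
    exact DF.cut_disjoint ((hmemJ i a).mp (by simpa using ha)).1
      ((hmemJ i b).mp (by simpa using hb)).1 hab
  -- the mass of the image of a cylinder
  set Λ : List (Fin DE.k) → ℝ := fun i => ∑ j ∈ J i, DF.pr j ^ s with hΛdef
  -- additivity of the mass
  have himdisj : ∀ (i : List (Fin DE.k)) (u u' : Fin DE.k), u ≠ u' →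
      Disjoint (f '' DE.cyl (i ++ [u])) (f '' DE.cyl (i ++ [u'])) := by
    intro i u u' huu
    rw [Set.disjoint_left]
    rintro x ⟨a, ha, rfl⟩ ⟨b, hb, hba⟩
    have hab : a = b := hbij.injOn (DustSys.cyl_sub DE _ ha) (DustSys.cyl_sub DE _ hb) hba.symm
    subst hab
    exact Set.disjoint_left.mp (DustSys.disjoint_children DE huu) ha hb
  have hΛadd : ∀ i : List (Fin DE.k), Λ i = ∑ u, Λ (i ++ [u]) := by
    intro i
    have hBdisj : ∀ u u' : Fin DE.k, u ≠ u' → Disjoint (J (i ++ [u])) (J (i ++ [u'])) := by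
      intro u u' huu
      rw [Finset.disjoint_left]
      intro j hj hj'
      obtain ⟨x, hx⟩ := DustSys.cyl_ne DF j
      exact Set.disjoint_left.mp (himdisj i u u' huu)
        (hJsub _ j hj hx) (hJsub _ j hj' hx)
    have hU : (⋃ j ∈ J i, DF.cyl j)
        = ⋃ j ∈ Finset.univ.biUnion (fun u : Fin DE.k => J (i ++ [u])), DF.cyl j := by
      calc (⋃ j ∈ J i, DF.cyl j) = f '' DE.cyl i := (hcov i).symm
        _ = f '' (⋃ u, DE.cyl (i ++ [u])) := by rw [← DustSys.cyl_eq_iUnion DE i]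
        _ = ⋃ u, f '' DE.cyl (i ++ [u]) := Set.image_iUnion
        _ = ⋃ u, ⋃ j ∈ J (i ++ [u]), DF.cyl j :=
            Set.iUnion_congr fun u => hcov (i ++ [u])
        _ = ⋃ j ∈ Finset.univ.biUnion (fun u : Fin DE.k => J (i ++ [u])), DF.cyl j := by
            rw [Finset.set_biUnion_biUnion]
            simp
    have hd' : (↑(Finset.univ.biUnion (fun u : Fin DE.k => J (i ++ [u]))) :
        Set (List (Fin DF.k))).Pairwise fun a b => Disjoint (DF.cyl a) (DF.cyl b) := by
      intro a ha b hb hab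
      simp only [Finset.coe_biUnion, Finset.coe_univ, Set.mem_iUnion, Finset.mem_coe,
        Set.mem_univ, true_and] at ha hb
      obtain ⟨u, -, hu⟩ := ha
      obtain ⟨u', -, hu'⟩ := hb
      rcases eq_or_ne u u' with rfl | huu
      · exact DF.cut_disjoint ((hmemJ _ a).mp hu).1 ((hmemJ _ b).mp hu').1 hab
      · exact Set.disjoint_of_subset (hJsub _ a hu) (hJsub _ b hu') (himdisj i u u' huu)
    have heq := DF.partition_sum hs hτs (hJdisj i) hd' hU
    rw [hΛdef]
    simp only
    rw [heq, Finset.sum_biUnion]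
    intro a _ b _ hab
    exact hBdisj a b hab
  -- containing words have size comparable to the cylinder
  have hsize : ∀ (i : List (Fin DE.k)) (j : List (Fin DF.k)),
      f '' DE.cyl i ⊆ DF.cyl j → C₁⁻¹ * (γE * DE.pr i) ≤ DF.pr j * DmF := by
    intro i j hsub
    obtain ⟨a, ha, b, hb, hab⟩ := DustSys.exists_far_pair DE hk2 hγE i
    have hfa : f a ∈ DF.cyl j := hsub (Set.mem_image_of_mem f ha)
    have hfb : f b ∈ DF.cyl j := hsub (Set.mem_image_of_mem f hb)
    have h1 : dist (f a) (f b) ≤ DF.pr j * DmF := DustSys.dist_le_of_mem_cyl DF hDmF hfa hfb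
    have h2 : C₁⁻¹ * (γE * DE.pr i) ≤ C₁⁻¹ * dist a b := by
      apply mul_le_mul_of_nonneg_left hab
      positivity
    exact le_trans (le_trans h2
      (hlow a (DustSys.cyl_sub DE i ha) b (DustSys.cyl_sub DE i hb))) h1
  -- existence of the maximal containing word
  have hjex : ∀ i : List (Fin DE.k), ∃ jst : List (Fin DF.k),
      (f '' DE.cyl i ⊆ DF.cyl jst) ∧ ∀ j, f '' DE.cyl i ⊆ DF.cyl j → j <+: jst := by
    intro i
    have hnil : f '' DE.cyl i ⊆ DF.cyl ([] : List (Fin DF.k)) := by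
      rw [DustSys.cyl_nil]; exact himg i
    have hlbc : ∀ j : List (Fin DF.k), f '' DE.cyl i ⊆ DF.cyl j →
        C₁⁻¹ * (γE * DE.pr i) / DmF ≤ DF.pr j := by
      intro j hj
      rw [div_le_iff₀ hDmF0']
      exact hsize i j hj
    have hfin : {j : List (Fin DF.k) | f '' DE.cyl i ⊆ DF.cyl j}.Finite := by
      obtain ⟨N, hN⟩ := exists_pow_lt_of_lt_one
        (show (0:ℝ) < C₁⁻¹ * (γE * DE.pr i) / DmF by
          have := DustSys.pr_pos DE i; positivity) DF.σmax_lt_one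
      apply Set.Finite.subset (List.finite_length_le (Fin DF.k) N)
      intro j hj
      simp only [Set.mem_setOf_eq]
      by_contra hlen
      push_neg at hlen
      have h1 : DF.pr j ≤ DF.σmax ^ j.length := DF.pr_le_pow j
      have h2 : DF.σmax ^ j.length ≤ DF.σmax ^ N :=
        pow_le_pow_of_le_one (le_of_lt DF.σmax_pos) (le_of_lt DF.σmax_lt_one) (by omega)
      have h3 := hlbc j hj
      linarith
    obtain ⟨jst, hjstC, hjstmax⟩ :=
      Set.Finite.exists_maximalFor List.length _ hfin ⟨[], hnil⟩
    refine ⟨jst, hjstC, ?_⟩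
    intro j hj
    obtain ⟨x, hx⟩ := (DustSys.cyl_ne DE i).image f
    rcases DustSys.comparable_of_not_disjoint DF j jst
      (Set.not_disjoint_iff.mpr ⟨x, hj hx, hjstC hx⟩) with h | h
    · exact h
    · have heq : jst = j := h.eq_of_length (le_antisymm h.length_le (hjstmax hj h.length_le))
      rw [heq]
  choose jstar hjst1 hjst2 using hjex
  -- shared smallness fact
  have hεsc : ∀ i : List (Fin DE.k), ε * DE.pr i * DmF < C₁⁻¹ * (γE * DE.pr i) := by
    intro i
    have := mul_lt_mul_of_pos_right hεkey (DustSys.pr_pos DE i)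
    calc ε * DE.pr i * DmF = ε * DmF * DE.pr i := by ring
      _ < C₁⁻¹ * γE * DE.pr i := this
      _ = C₁⁻¹ * (γE * DE.pr i) := by ring
  -- every piece extends the maximal containing word
  have hjmem : ∀ (i : List (Fin DE.k)) (j : List (Fin DF.k)), j ∈ J i → jstar i <+: j := by
    intro i j hj
    obtain ⟨x, hx⟩ := DustSys.cyl_ne DF j
    have hxim : x ∈ f '' DE.cyl i := hJsub i j hj hx
    rcases DustSys.comparable_of_not_disjoint DF (jstar i) j
      (Set.not_disjoint_iff.mpr ⟨x, hjst1 i hxim, hx⟩) with h | h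
    · exact h
    · exfalso
      have hsub2 : f '' DE.cyl i ⊆ DF.cyl j := (hjst1 i).trans (DustSys.cyl_mono DF h)
      have h1 := hsize i j hsub2
      have h2 : DF.pr j ≤ ε * DE.pr i := ((hmemJ i j).mp hj).1.1
      have h3 : DF.pr j * DmF ≤ ε * DE.pr i * DmF :=
        mul_le_mul_of_nonneg_right h2 (le_of_lt hDmF0')
      have h4 := hεsc i
      linarith
  -- monotonicity of jstar
  have hjmon : ∀ (i : List (Fin DE.k)) (u : Fin DE.k), jstar i <+: jstar (i ++ [u]) := by
    intro i u
    apply hjst2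
    exact (Set.image_mono (f := f)
      (DustSys.cyl_mono DE (List.prefix_append i [u]))).trans (hjst1 i)
  have hjmonrep : ∀ (i : List (Fin DE.k)) (u : Fin DE.k) (c : ℕ),
      jstar i <+: jstar (i ++ List.replicate c u) := by
    intro i u c
    induction c generalizing i with
    | zero => rw [List.replicate_zero, List.append_nil]
    | succ c ih =>
      have h1 : i ++ List.replicate (c+1) u = (i ++ [u]) ++ List.replicate c u := by
        rw [List.replicate_succ, List.append_cons]
      rw [h1]
      exact (hjmon i u).trans (ih (i ++ [u]))
  -- upper bound on the maximal containing word
  have hjub : ∀ i : List (Fin DE.k), DF.pr (jstar i) * γF ≤ C₁ * (DE.pr i * DmE) := by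
    intro i
    obtain ⟨x, hx⟩ := (DustSys.cyl_ne DE i).image f
    have hxj : x ∈ DF.cyl (jstar i) := hjst1 i hx
    rw [DustSys.cyl_eq_iUnion DF (jstar i)] at hxj
    obtain ⟨a, hxa⟩ := Set.mem_iUnion.mp hxj
    have hnsub : ¬ (f '' DE.cyl i ⊆ DF.cyl (jstar i ++ [a])) := by
      intro hsub
      have := (hjst2 i _ hsub).length_le
      simp at this
    obtain ⟨y, hy, hyn⟩ := Set.not_subset.mp hnsub
    have hyj : y ∈ DF.cyl (jstar i) := hjst1 i hy
    rw [DustSys.cyl_eq_iUnion DF (jstar i)] at hyj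
    obtain ⟨a', hya⟩ := Set.mem_iUnion.mp hyj
    have haa : a ≠ a' := by rintro rfl; exact hyn hya
    have hgap : γF * DF.pr (jstar i) ≤ dist x y := DustSys.child_gap DF hγF haa hxa hya
    obtain ⟨ax, hax, rfl⟩ := hx
    obtain ⟨ay, hay, rfl⟩ := hy
    have h2 : dist (f ax) (f ay) ≤ C₁ * dist ax ay :=
      hup ax (DustSys.cyl_sub DE i hax) ay (DustSys.cyl_sub DE i hay)
    have h3 : dist ax ay ≤ DE.pr i * DmE := DustSys.dist_le_of_mem_cyl DE hDmE hax hay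
    calc DF.pr (jstar i) * γF = γF * DF.pr (jstar i) := mul_comm _ _
      _ ≤ dist (f ax) (f ay) := hgap
      _ ≤ C₁ * dist ax ay := h2
      _ ≤ C₁ * (DE.pr i * DmE) := mul_le_mul_of_nonneg_left h3 (le_of_lt hC₁0)
  -- lower bound on pieces and on jstar
  have hcutlb : ∀ (i : List (Fin DE.k)) (j : List (Fin DF.k)), j ∈ J i →
      DF.σmin * (ε * DE.pr i) < DF.pr j := by
    intro i j hj
    exact DF.cut_lower ((hmemJ i j).mp hj).1
      (DF.cut_ne_nil (hsc1 i) ((hmemJ i j).mp hj).1)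
  have hjlb : ∀ i : List (Fin DE.k), DF.σmin * (ε * DE.pr i) ≤ DF.pr (jstar i) := by
    intro i
    obtain ⟨j, hj⟩ := hJne i
    exact le_of_lt (lt_of_lt_of_le (hcutlb i j hj)
      (DustSys.pr_prefix_le DF (hjmem i j hj)))
  -- factorization of the mass
  set Ssum : Finset (List (Fin DF.k)) → ℝ := fun W => ∑ w ∈ W, DF.pr w ^ s with hSsumdef
  set Wc : List (Fin DE.k) → Finset (List (Fin DF.k)) :=
    fun i => (J i).image (fun j => j.drop (jstar i).length) with hWcdef
  have hjdecomp : ∀ (i : List (Fin DE.k)) (j : List (Fin DF.k)), j ∈ J i →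
      jstar i ++ j.drop (jstar i).length = j := by
    intro i j hj
    obtain ⟨t, ht⟩ := hjmem i j hj
    rw [← ht, List.drop_left]
  have hfact : ∀ i : List (Fin DE.k), Λ i = DF.pr (jstar i) ^ s * Ssum (Wc i) := by
    intro i
    have hinj : ∀ x ∈ J i, ∀ y ∈ J i,
        x.drop (jstar i).length = y.drop (jstar i).length → x = y := by
      intro x hx y hy hxy
      rw [← hjdecomp i x hx, ← hjdecomp i y hy, hxy]
    show (∑ j ∈ J i, DF.pr j ^ s) = _
    rw [hWcdef, hSsumdef]
    simp only
    rw [Finset.sum_image hinj, Finset.mul_sum]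
    apply Finset.sum_congr rfl
    intro j hj
    rw [← Real.mul_rpow (le_of_lt (DustSys.pr_pos DF _)) (le_of_lt (DustSys.pr_pos DF _)),
      ← DustSys.pr_append, hjdecomp i j hj]
  -- constants for the configuration bound
  set C₂ := C₁ * DmE / γF with hC₂def
  have hC₂0 : (0:ℝ) < C₂ := by positivity
  have hjub' : ∀ i : List (Fin DE.k), DF.pr (jstar i) ≤ C₂ * DE.pr i := by
    intro i
    rw [hC₂def, div_mul_eq_mul_div, le_div_iff₀ hγF0]
    calc DF.pr (jstar i) * γF ≤ C₁ * (DE.pr i * DmE) := hjub i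
      _ = C₁ * DmE * DE.pr i := by ring
  set cW := DF.σmin * ε / C₂ with hcWdef
  have hcW0 : 0 < cW := by
    rw [hcWdef]
    exact div_pos (mul_pos DF.σmin_pos hε0) hC₂0
  have hWlb : ∀ i : List (Fin DE.k), ∀ w ∈ Wc i, cW ≤ DF.pr w := by
    intro i w hw
    rw [hWcdef] at hw
    simp only [Finset.mem_image] at hw
    obtain ⟨j, hj, rfl⟩ := hw
    have h1 := hcutlb i j hj
    have h2 : DF.pr j = DF.pr (jstar i) * DF.pr (j.drop (jstar i).length) := by
      conv_lhs => rw [← hjdecomp i j hj]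
      rw [DustSys.pr_append]
    have h3 := hjub' i
    have hpd : 0 < DF.pr (j.drop (jstar i).length) := DustSys.pr_pos DF _
    have hpri : 0 < DE.pr i := DustSys.pr_pos DE i
    have h4 : (DF.σmin * ε) * DE.pr i ≤ (C₂ * DF.pr (j.drop (jstar i).length)) * DE.pr i := by
      calc (DF.σmin * ε) * DE.pr i = DF.σmin * (ε * DE.pr i) := by ring
        _ ≤ DF.pr j := le_of_lt h1
        _ = DF.pr (jstar i) * DF.pr (j.drop (jstar i).length) := h2
        _ ≤ (C₂ * DE.pr i) * DF.pr (j.drop (jstar i).length) :=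
            mul_le_mul_of_nonneg_right h3 (le_of_lt hpd)
        _ = (C₂ * DF.pr (j.drop (jstar i).length)) * DE.pr i := by ring
    have h5 := le_of_mul_le_mul_right h4 hpri
    rw [hcWdef, div_le_iff₀ hC₂0]
    calc DF.σmin * ε ≤ C₂ * DF.pr (j.drop (jstar i).length) := h5
      _ = DF.pr (j.drop (jstar i).length) * C₂ := mul_comm _ _
  obtain ⟨L, hL⟩ := exists_pow_lt_of_lt_one hcW0 DF.σmax_lt_one
  have hWsub : ∀ i : List (Fin DE.k), Wc i ⊆ DF.wordsLE L := by
    intro i w hw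
    rw [DustSys.mem_wordsLE]
    by_contra hlen
    push_neg at hlen
    have h1 : DF.pr w ≤ DF.σmax ^ w.length := DF.pr_le_pow w
    have h2 : DF.σmax ^ w.length ≤ DF.σmax ^ L :=
      pow_le_pow_of_le_one (le_of_lt DF.σmax_pos) (le_of_lt DF.σmax_lt_one) (by omega)
    have h3 := hWlb i w hw
    linarith
  have hWcne : ∀ i : List (Fin DE.k), (Wc i).Nonempty := by
    intro i
    obtain ⟨j, hj⟩ := hJne i
    exact ⟨j.drop (jstar i).length, by
      rw [hWcdef]; exact Finset.mem_image_of_mem _ hj⟩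
  have hSpos : ∀ i : List (Fin DE.k), 0 < Ssum (Wc i) := by
    intro i
    rw [hSsumdef]
    exact Finset.sum_pos (fun w _ => Real.rpow_pos_of_pos (DustSys.pr_pos DF w) s) (hWcne i)
  have hSnonneg : ∀ W : Finset (List (Fin DF.k)), 0 ≤ Ssum W := by
    intro W
    rw [hSsumdef]
    exact Finset.sum_nonneg (fun w _ => le_of_lt (Real.rpow_pos_of_pos (DustSys.pr_pos DF w) s))
  -- global mass bounds
  set A1 := (DF.σmin * ε) ^ s with hA1def
  have hA10 : 0 < A1 := Real.rpow_pos_of_pos (mul_pos DF.σmin_pos hε0) s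
  have hΛlow : ∀ i : List (Fin DE.k), A1 * DE.pr i ^ s ≤ Λ i := by
    intro i
    obtain ⟨j, hj⟩ := hJne i
    have h1 := hcutlb i j hj
    have h2 : A1 * DE.pr i ^ s = (DF.σmin * (ε * DE.pr i)) ^ s := by
      rw [hA1def, ← Real.mul_rpow
        (le_of_lt (mul_pos DF.σmin_pos hε0)) (le_of_lt (DustSys.pr_pos DE i)), mul_assoc]
    rw [h2]
    calc (DF.σmin * (ε * DE.pr i)) ^ s ≤ DF.pr j ^ s :=
          Real.rpow_le_rpow
            (le_of_lt (mul_pos DF.σmin_pos (mul_pos hε0 (DustSys.pr_pos DE i))))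
            (le_of_lt h1) (le_of_lt hs)
      _ ≤ Λ i := Finset.single_le_sum
          (fun w _ => le_of_lt (Real.rpow_pos_of_pos (DustSys.pr_pos DF w) s)) hj
  set NL := ((DF.wordsLE L).card : ℝ) with hNLdef
  have hNL1 : (1:ℝ) ≤ NL := by
    rw [hNLdef]
    have : ([] : List (Fin DF.k)) ∈ DF.wordsLE L := by
      rw [DustSys.mem_wordsLE]; simp
    exact_mod_cast Finset.card_pos.mpr ⟨[], this⟩
  have hSle : ∀ W : Finset (List (Fin DF.k)), W ⊆ DF.wordsLE L → Ssum W ≤ NL := by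
    intro W hWsubL
    rw [hSsumdef, hNLdef]
    calc ∑ w ∈ W, DF.pr w ^ s ≤ ∑ w ∈ W, 1 :=
          Finset.sum_le_sum (fun w _ => Real.rpow_le_one
            (le_of_lt (DustSys.pr_pos DF w)) (DustSys.pr_le_one DF w) (le_of_lt hs))
      _ = (W.card : ℝ) := by simp
      _ ≤ ((DF.wordsLE L).card : ℝ) := by exact_mod_cast Finset.card_le_card hWsubL
  set A2 := C₂ ^ s * NL with hA2def
  have hΛup : ∀ i : List (Fin DE.k), Λ i ≤ A2 * DE.pr i ^ s := by
    intro i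
    rw [hfact i]
    have h2 : DF.pr (jstar i) ^ s ≤ (C₂ * DE.pr i) ^ s :=
      Real.rpow_le_rpow (le_of_lt (DustSys.pr_pos DF _)) (hjub' i) (le_of_lt hs)
    have h3 : (C₂ * DE.pr i) ^ s = C₂ ^ s * DE.pr i ^ s :=
      Real.mul_rpow (le_of_lt hC₂0) (le_of_lt (DustSys.pr_pos DE i))
    calc DF.pr (jstar i) ^ s * Ssum (Wc i)
        ≤ (C₂ * DE.pr i) ^ s * NL := by
          exact mul_le_mul h2 (hSle _ (hWsub i)) (hSnonneg _)
            (le_of_lt (Real.rpow_pos_of_pos (mul_pos hC₂0 (DustSys.pr_pos DE i)) s))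
      _ = A2 * DE.pr i ^ s := by rw [h3, hA2def]; ring
  -- normalized masses
  have hprs0 : ∀ i : List (Fin DE.k), 0 < DE.pr i ^ s :=
    fun i => Real.rpow_pos_of_pos (DustSys.pr_pos DE i) s
  set wE : List (Fin DE.k) → ℝ := fun i => Λ i / DE.pr i ^ s with hwEdef
  have hΛw : ∀ i : List (Fin DE.k), Λ i = wE i * DE.pr i ^ s :=
    fun i => (div_mul_cancel₀ _ (ne_of_gt (hprs0 i))).symm
  have hwlow : ∀ i : List (Fin DE.k), A1 ≤ wE i := by
    intro i
    rw [hwEdef]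
    simp only
    rw [le_div_iff₀ (hprs0 i)]
    exact hΛlow i
  have hwup : ∀ i : List (Fin DE.k), wE i ≤ A2 := by
    intro i
    rw [hwEdef]
    simp only
    rw [div_le_iff₀ (hprs0 i)]
    exact hΛup i
  set Wstar := sSup (Set.range wE) with hWstardef
  have hbdd : BddAbove (Set.range wE) := ⟨A2, by rintro x ⟨i, rfl⟩; exact hwup i⟩
  have hWub : ∀ i : List (Fin DE.k), wE i ≤ Wstar := fun i => le_csSup hbdd ⟨i, rfl⟩
  have hW0 : 0 < Wstar := lt_of_lt_of_le hA10 (le_trans (hwlow []) (hWub []))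
  -- averaging identity
  have hprsplit : ∀ (i : List (Fin DE.k)) (u : Fin DE.k),
      DE.pr (i ++ [u]) ^ s = DE.pr i ^ s * DE.σ u ^ s := by
    intro i u
    rw [DustSys.pr_append, DustSys.pr_cons, DustSys.pr_nil, mul_one,
      Real.mul_rpow (le_of_lt (DustSys.pr_pos DE i)) (le_of_lt (DE.hσ0 u))]
  have havg : ∀ i : List (Fin DE.k),
      wE i * DE.pr i ^ s = ∑ u, DE.σ u ^ s * (wE (i ++ [u]) * DE.pr i ^ s) := by
    intro i
    rw [← hΛw i, hΛadd i]
    apply Finset.sum_congr rfl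
    intro u _
    rw [hΛw (i ++ [u]), hprsplit i u]
    ring
  -- one-step descent towards the supremum
  have hdesc : ∀ (i : List (Fin DE.k)) (u : Fin DE.k) (δ : ℝ), 0 < δ →
      Wstar - δ ≤ wE i → Wstar - δ / DE.σ u ^ s ≤ wE (i ++ [u]) := by
    intro i u δ hδ hi
    have hlam0 : (0:ℝ) < DE.σ u ^ s := Real.rpow_pos_of_pos (DE.hσ0 u) s
    have h2 : wE i ≤ DE.σ u ^ s * wE (i ++ [u]) + (1 - DE.σ u ^ s) * Wstar := by
      have h1 : wE i * DE.pr i ^ s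
          ≤ (DE.σ u ^ s * wE (i ++ [u]) + (1 - DE.σ u ^ s) * Wstar) * DE.pr i ^ s := by
        rw [havg i, ← Finset.add_sum_erase Finset.univ _ (Finset.mem_univ u)]
        have hrest : ∑ u' ∈ Finset.univ.erase u, DE.σ u' ^ s * (wE (i ++ [u']) * DE.pr i ^ s)
            ≤ ∑ u' ∈ Finset.univ.erase u, DE.σ u' ^ s * (Wstar * DE.pr i ^ s) := by
          apply Finset.sum_le_sum
          intro u' _
          apply mul_le_mul_of_nonneg_left _ (le_of_lt (Real.rpow_pos_of_pos (DE.hσ0 u') s))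
          exact mul_le_mul_of_nonneg_right (hWub _) (le_of_lt (hprs0 i))
        have hersum : ∑ u' ∈ Finset.univ.erase u, DE.σ u' ^ s = 1 - DE.σ u ^ s := by
          have := Finset.add_sum_erase Finset.univ (fun u' : Fin DE.k => DE.σ u' ^ s)
            (Finset.mem_univ u)
          rw [hρs] at this
          linarith
        have : ∑ u' ∈ Finset.univ.erase u, DE.σ u' ^ s * (Wstar * DE.pr i ^ s)
            = (1 - DE.σ u ^ s) * (Wstar * DE.pr i ^ s) := by
          rw [← Finset.sum_mul, hersum]
        rw [this] at hrest
        have := add_le_add_right hrest (DE.σ u ^ s * (wE (i ++ [u]) * DE.pr i ^ s))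
        calc DE.σ u ^ s * (wE (i ++ [u]) * DE.pr i ^ s)
              + ∑ u' ∈ Finset.univ.erase u, DE.σ u' ^ s * (wE (i ++ [u']) * DE.pr i ^ s)
            ≤ DE.σ u ^ s * (wE (i ++ [u]) * DE.pr i ^ s)
              + (1 - DE.σ u ^ s) * (Wstar * DE.pr i ^ s) := this
          _ = (DE.σ u ^ s * wE (i ++ [u]) + (1 - DE.σ u ^ s) * Wstar) * DE.pr i ^ s := by
              ring
      exact le_of_mul_le_mul_right h1 (hprs0 i)
    have h3 : DE.σ u ^ s * Wstar - δ ≤ DE.σ u ^ s * wE (i ++ [u]) := by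
      have := le_trans hi h2
      nlinarith
    have h4 : DE.σ u ^ s * (Wstar - δ / DE.σ u ^ s) = DE.σ u ^ s * Wstar - δ := by
      rw [mul_sub, mul_div_cancel₀ _ (ne_of_gt hlam0)]
    exact le_of_mul_le_mul_left (by rw [h4]; exact h3) hlam0
  -- multi-step descent
  have hdesct : ∀ (u : Fin DE.k) (t : ℕ) (i : List (Fin DE.k)) (δ : ℝ), 0 < δ →
      Wstar - δ ≤ wE i →
      Wstar - δ / (DE.σ u ^ s) ^ t ≤ wE (i ++ List.replicate t u) := by
    intro u t
    induction t with
    | zero =>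
      intro i δ hδ hi
      simpa using hi
    | succ t ih =>
      intro i δ hδ hi
      have hlam0 : (0:ℝ) < DE.σ u ^ s := Real.rpow_pos_of_pos (DE.hσ0 u) s
      have h1 := hdesc i u δ hδ hi
      have h2 := ih (i ++ [u]) (δ / DE.σ u ^ s) (div_pos hδ hlam0) h1
      have h3 : δ / DE.σ u ^ s / (DE.σ u ^ s) ^ t = δ / (DE.σ u ^ s) ^ (t + 1) := by
        rw [div_div, ← pow_succ']
      have h4 : i ++ List.replicate (t + 1) u = (i ++ [u]) ++ List.replicate t u := by
        rw [List.replicate_succ, List.append_cons]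
      rw [h4, ← h3]
      exact h2
  -- configuration universe
  set configs := (DF.wordsLE L).powerset with hconfigsdef
  set M := configs.card with hMdef
  have hM1 : 1 ≤ M :=
    Finset.card_pos.mpr ⟨∅, Finset.mem_powerset.mpr (Finset.empty_subset _)⟩
  have hWcmem : ∀ i : List (Fin DE.k), Wc i ∈ configs :=
    fun i => Finset.mem_powerset.mpr (hWsub i)
  have hlampos : ∀ u : Fin DE.k, (0:ℝ) < DE.σ u ^ s :=
    fun u => Real.rpow_pos_of_pos (DE.hσ0 u) s
  have hlamlt1 : ∀ u : Fin DE.k, DE.σ u ^ s < 1 :=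
    fun u => Real.rpow_lt_one (le_of_lt (DE.hσ0 u)) (DE.hσ1 u) hs
  -- ============ semigroup part ============
  have hsemigroup : ∀ u : Fin DE.k, ∃ g : ℕ, 0 < g ∧
      DE.σ u ^ g ∈ Subsemigroup.closure (Set.range fun j => DF.σ j) := by
    intro u
    have hlam0 := hlampos u
    have hlamle1 : DE.σ u ^ s ≤ 1 := le_of_lt (hlamlt1 u)
    set cV := cW * DE.σ u ^ M with hcVdef
    have hcV0 : 0 < cV := mul_pos hcW0 (pow_pos (DE.hσ0 u) M)
    obtain ⟨LV, hLV⟩ := exists_pow_lt_of_lt_one hcV0 DF.σmax_lt_one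
    have hdata : ∀ r : ℕ, ∃ (g : ℕ) (v : List (Fin DF.k)),
        1 ≤ g ∧ g ≤ M ∧ v.length ≤ LV ∧
        (DE.σ u ^ s) ^ g * (Wstar - 1/((r:ℝ)+1)) ≤ DF.pr v ^ s * Wstar ∧
        DF.pr v ^ s * (Wstar - 1/((r:ℝ)+1)) ≤ (DE.σ u ^ s) ^ g * Wstar := by
      intro r
      have hrpos : (0:ℝ) < 1/((r:ℝ)+1) := by positivity
      have hδ0 : 0 < (DE.σ u ^ s) ^ M * (1/((r:ℝ)+1)) := mul_pos (pow_pos hlam0 M) hrpos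
      obtain ⟨x, hxmem, hxlt⟩ := exists_lt_of_lt_csSup
        (Set.range_nonempty wE) (sub_lt_self Wstar hδ0)
      obtain ⟨i, rfl⟩ := hxmem
      have hrun : ∀ t : ℕ, t ≤ M →
          Wstar - 1/((r:ℝ)+1) ≤ wE (i ++ List.replicate t u) := by
        intro t ht
        have hd := hdesct u t i ((DE.σ u ^ s) ^ M * (1/((r:ℝ)+1))) hδ0 (le_of_lt hxlt)
        have hq : (DE.σ u ^ s) ^ M * (1/((r:ℝ)+1)) / (DE.σ u ^ s) ^ t ≤ 1/((r:ℝ)+1) := by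
          rw [div_le_iff₀ (pow_pos hlam0 t)]
          calc (DE.σ u ^ s) ^ M * (1/((r:ℝ)+1)) ≤ (DE.σ u ^ s) ^ t * (1/((r:ℝ)+1)) :=
                mul_le_mul_of_nonneg_right
                  (pow_le_pow_of_le_one (le_of_lt hlam0) hlamle1 ht) (le_of_lt hrpos)
            _ = 1/((r:ℝ)+1) * (DE.σ u ^ s) ^ t := mul_comm _ _
        linarith
      have hmaps : ∀ t ∈ Finset.range (M+1), Wc (i ++ List.replicate t u) ∈ configs :=
        fun t _ => hWcmem _
      obtain ⟨t1, ht1, t2, ht2, hne12, hWeq12⟩ :=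
        Finset.exists_ne_map_eq_of_card_lt_of_maps_to
          (by rw [Finset.card_range]; omega) hmaps
      obtain ⟨t, t', hteq, htt, ht'M⟩ : ∃ t t',
          Wc (i ++ List.replicate t u) = Wc (i ++ List.replicate t' u) ∧ t < t' ∧ t' ≤ M := by
        rcases lt_or_gt_of_ne hne12 with h | h
        · refine ⟨t1, t2, hWeq12, h, ?_⟩
          have := Finset.mem_range.mp ht2; omega
        · refine ⟨t2, t1, hWeq12.symm, h, ?_⟩
          have := Finset.mem_range.mp ht1; omega
      set g := t' - t with hgdef
      set i1 := i ++ List.replicate t u with hi1def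
      set i2 := i ++ List.replicate t' u with hi2def
      have hi21 : i2 = i1 ++ List.replicate g u := by
        rw [hi1def, hi2def, List.append_assoc, ← List.replicate_add]
        congr 2
        omega
      have hpre : jstar i1 <+: jstar i2 := by rw [hi21]; exact hjmonrep i1 u g
      set v := (jstar i2).drop (jstar i1).length with hvdef
      have hjs2 : jstar i2 = jstar i1 ++ v := by
        obtain ⟨t0, ht0⟩ := hpre
        rw [hvdef, ← ht0, List.drop_left]
      have hexact : Λ i2 = DF.pr v ^ s * Λ i1 := by
        rw [hfact i1, hfact i2, hjs2, DustSys.pr_append,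
          Real.mul_rpow (le_of_lt (DustSys.pr_pos DF _)) (le_of_lt (DustSys.pr_pos DF _)),
          ← hteq]
        ring
      have hpr1 : DE.pr i1 ^ s = DE.pr i ^ s * (DE.σ u ^ s) ^ t := by
        rw [hi1def, DustSys.pr_append, DustSys.pr_replicate,
          Real.mul_rpow (le_of_lt (DustSys.pr_pos DE i)) (le_of_lt (pow_pos (DE.hσ0 u) t)),
          rpow_pow_comm (le_of_lt (DE.hσ0 u))]
      have hpr2 : DE.pr i2 ^ s = DE.pr i ^ s * (DE.σ u ^ s) ^ t' := by
        rw [hi2def, DustSys.pr_append, DustSys.pr_replicate,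
          Real.mul_rpow (le_of_lt (DustSys.pr_pos DE i)) (le_of_lt (pow_pos (DE.hσ0 u) t')),
          rpow_pow_comm (le_of_lt (DE.hσ0 u))]
      have hkey : DF.pr v ^ s * (wE i1 * (DE.σ u ^ s) ^ t) = wE i2 * (DE.σ u ^ s) ^ t' := by
        have h5 := hexact
        rw [hΛw i1, hΛw i2, hpr1, hpr2] at h5
        have h6 : (DF.pr v ^ s * (wE i1 * (DE.σ u ^ s) ^ t)) * DE.pr i ^ s
            = (wE i2 * (DE.σ u ^ s) ^ t') * DE.pr i ^ s := by linear_combination -h5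
        exact mul_right_cancel₀ (ne_of_gt (hprs0 i)) h6
      have hlamsplit : (DE.σ u ^ s) ^ t' = (DE.σ u ^ s) ^ t * (DE.σ u ^ s) ^ g := by
        rw [← pow_add]
        congr 1
        omega
      have hcancel : DF.pr v ^ s * wE i1 = wE i2 * (DE.σ u ^ s) ^ g := by
        rw [hlamsplit] at hkey
        have h6 : (DF.pr v ^ s * wE i1) * (DE.σ u ^ s) ^ t
            = (wE i2 * (DE.σ u ^ s) ^ g) * (DE.σ u ^ s) ^ t := by linear_combination hkey
        exact mul_right_cancel₀ (ne_of_gt (pow_pos hlam0 t)) h6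
      have hvlb : cV ≤ DF.pr v := by
        have h7 := hjlb i2
        have h8 := hjub' i1
        have h9 : DF.pr (jstar i2) = DF.pr (jstar i1) * DF.pr v := by
          rw [hjs2, DustSys.pr_append]
        have h10 : DE.pr i2 = DE.pr i1 * DE.σ u ^ g := by
          rw [hi21, DustSys.pr_append, DustSys.pr_replicate]
        have hp1 : 0 < DE.pr i1 := DustSys.pr_pos DE i1
        have h11 : (DF.σmin * ε * DE.σ u ^ g) * DE.pr i1 ≤ (C₂ * DF.pr v) * DE.pr i1 := by
          calc (DF.σmin * ε * DE.σ u ^ g) * DE.pr i1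
              = DF.σmin * (ε * DE.pr i2) := by rw [h10]; ring
            _ ≤ DF.pr (jstar i2) := h7
            _ = DF.pr (jstar i1) * DF.pr v := h9
            _ ≤ (C₂ * DE.pr i1) * DF.pr v :=
                mul_le_mul_of_nonneg_right h8 (le_of_lt (DustSys.pr_pos DF v))
            _ = (C₂ * DF.pr v) * DE.pr i1 := by ring
        have h12 := le_of_mul_le_mul_right h11 hp1
        have h13 : DE.σ u ^ M ≤ DE.σ u ^ g :=
          pow_le_pow_of_le_one (le_of_lt (DE.hσ0 u)) (le_of_lt (DE.hσ1 u)) (by omega)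
        rw [hcVdef, hcWdef, div_mul_eq_mul_div, div_le_iff₀ hC₂0]
        calc DF.σmin * ε * DE.σ u ^ M ≤ DF.σmin * ε * DE.σ u ^ g :=
              mul_le_mul_of_nonneg_left h13 (le_of_lt (mul_pos DF.σmin_pos hε0))
          _ ≤ C₂ * DF.pr v := h12
          _ = DF.pr v * C₂ := mul_comm _ _
      have hvlen : v.length ≤ LV := by
        by_contra hlen
        push_neg at hlen
        have h1 : DF.pr v ≤ DF.σmax ^ v.length := DF.pr_le_pow v
        have h2 : DF.σmax ^ v.length ≤ DF.σmax ^ LV :=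
          pow_le_pow_of_le_one (le_of_lt DF.σmax_pos) (le_of_lt DF.σmax_lt_one) (by omega)
        linarith
      have hb1 : Wstar - 1/((r:ℝ)+1) ≤ wE i1 := hrun t (by omega)
      have hb2 : Wstar - 1/((r:ℝ)+1) ≤ wE i2 := hrun t' ht'M
      have hpv0 : 0 < DF.pr v ^ s := Real.rpow_pos_of_pos (DustSys.pr_pos DF v) s
      refine ⟨g, v, by omega, by omega, hvlen, ?_, ?_⟩
      · calc (DE.σ u ^ s) ^ g * (Wstar - 1/((r:ℝ)+1))
            ≤ (DE.σ u ^ s) ^ g * wE i2 :=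
              mul_le_mul_of_nonneg_left hb2 (le_of_lt (pow_pos hlam0 g))
          _ = wE i2 * (DE.σ u ^ s) ^ g := mul_comm _ _
          _ = DF.pr v ^ s * wE i1 := hcancel.symm
          _ ≤ DF.pr v ^ s * Wstar := mul_le_mul_of_nonneg_left (hWub i1) (le_of_lt hpv0)
      · calc DF.pr v ^ s * (Wstar - 1/((r:ℝ)+1))
            ≤ DF.pr v ^ s * wE i1 :=
              mul_le_mul_of_nonneg_left hb1 (le_of_lt hpv0)
          _ = wE i2 * (DE.σ u ^ s) ^ g := hcancel
          _ ≤ Wstar * (DE.σ u ^ s) ^ g :=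
              mul_le_mul_of_nonneg_right (hWub i2) (le_of_lt (pow_pos hlam0 g))
          _ = (DE.σ u ^ s) ^ g * Wstar := mul_comm _ _
    choose gf vf hg1 hgM hvlenf hineq1 hineq2 using hdata
    obtain ⟨⟨g, v⟩, hfib⟩ := exists_infinite_fiber_finset (fun r => (gf r, vf r))
      ((Finset.Icc 1 M) ×ˢ (DF.wordsLE LV)) (fun r => by
        rw [Finset.mem_product, Finset.mem_Icc, DustSys.mem_wordsLE]
        exact ⟨⟨hg1 r, hgM r⟩, hvlenf r⟩)
    obtain ⟨r0, hr0⟩ := hfib.nonempty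
    have hr0' : gf r0 = g ∧ vf r0 = v := by
      have : (gf r0, vf r0) = (g, v) := hr0
      exact ⟨congrArg Prod.fst this, congrArg Prod.snd this⟩
    have hg0 : 0 < g := by
      have h := hg1 r0
      rw [hr0'.1] at h
      omega
    have heq : DF.pr v ^ s = (DE.σ u ^ s) ^ g := by
      apply squeeze_pair (Real.rpow_pos_of_pos (DustSys.pr_pos DF v) s)
        (pow_pos (hlampos u) g) hW0
      intro ξ hξ
      obtain ⟨N, hN⟩ := exists_nat_gt (1/ξ)
      obtain ⟨r, hrfib, hrN⟩ := hfib.exists_gt N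
      have hηξ : 1/((r:ℝ)+1) ≤ ξ := by
        have h1 : (1:ℝ)/ξ < (N:ℝ) + 1 := by
          have : (0:ℝ) ≤ N := Nat.cast_nonneg N
          linarith
        have h2 : ((N:ℝ)+1) ≤ (r:ℝ) + 1 := by
          have : (N:ℝ) ≤ r := by exact_mod_cast le_of_lt hrN
          linarith
        calc 1/((r:ℝ)+1) ≤ 1/((N:ℝ)+1) := one_div_le_one_div_of_le (by positivity) h2
          _ ≤ ξ := by
              rw [div_le_iff₀ (by positivity)]
              rw [div_lt_iff₀ hξ] at h1
              nlinarith
      have hgr : gf r = g ∧ vf r = v := by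
        have h : (gf r, vf r) = (g, v) := hrfib
        exact ⟨congrArg Prod.fst h, congrArg Prod.snd h⟩
      refine ⟨1/((r:ℝ)+1), by positivity, hηξ, ?_, ?_⟩
      · have h := hineq1 r
        rw [hgr.1, hgr.2] at h
        exact h
      · have h := hineq2 r
        rw [hgr.1, hgr.2] at h
        exact h
    have hbase : DF.pr v = DE.σ u ^ g := by
      apply rpow_base_inj (DustSys.pr_pos DF v) (pow_pos (DE.hσ0 u) g) hs
      rw [rpow_pow_comm (le_of_lt (DE.hσ0 u))]
      exact heq
    have hvne : v ≠ [] := by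
      intro hv
      rw [hv, DustSys.pr_nil] at hbase
      have h1 : DE.σ u ^ g < 1 :=
        pow_lt_one₀ (le_of_lt (DE.hσ0 u)) (DE.hσ1 u) (by omega)
      rw [← hbase] at h1
      exact lt_irrefl 1 h1
    refine ⟨g, hg0, ?_⟩
    rw [← hbase]
    exact prod_map_mem_closure DF.σ hvne
  -- ============ field part ============
  have hfield : ∀ u : Fin DE.k,
      DE.σ u ^ s ∈ Subfield.closure (Set.range fun j => DF.σ j ^ s) := by
    intro u
    have hlam0 := hlampos u
    have hlamle1 : DE.σ u ^ s ≤ 1 := le_of_lt (hlamlt1 u)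
    set cV := cW * DE.σ u ^ M with hcVdef
    have hcV0 : 0 < cV := mul_pos hcW0 (pow_pos (DE.hσ0 u) M)
    obtain ⟨LV, hLV⟩ := exists_pow_lt_of_lt_one hcV0 DF.σmax_lt_one
    have hdata : ∀ r : ℕ, ∃ (v : List (Fin DF.k)) (W W' : Finset (List (Fin DF.k))),
        v.length ≤ LV ∧ W ∈ configs ∧ W' ∈ configs ∧ 0 < Ssum W ∧ 0 < Ssum W' ∧
        (DE.σ u ^ s * Ssum W) * (Wstar - 1/((r:ℝ)+1)) ≤ (DF.pr v ^ s * Ssum W') * Wstar ∧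
        (DF.pr v ^ s * Ssum W') * (Wstar - 1/((r:ℝ)+1)) ≤ (DE.σ u ^ s * Ssum W) * Wstar := by
      intro r
      have hrpos : (0:ℝ) < 1/((r:ℝ)+1) := by positivity
      have hδ0 : 0 < DE.σ u ^ s * (1/((r:ℝ)+1)) := mul_pos hlam0 hrpos
      obtain ⟨x, hxmem, hxlt⟩ := exists_lt_of_lt_csSup
        (Set.range_nonempty wE) (sub_lt_self Wstar hδ0)
      obtain ⟨i, rfl⟩ := hxmem
      have hb0 : Wstar - 1/((r:ℝ)+1) ≤ wE i := by
        have h1 : DE.σ u ^ s * (1/((r:ℝ)+1)) ≤ 1/((r:ℝ)+1) := by nlinarith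
        linarith [le_of_lt hxlt]
      have hb1 : Wstar - 1/((r:ℝ)+1) ≤ wE (i ++ [u]) := by
        have hd := hdesc i u (DE.σ u ^ s * (1/((r:ℝ)+1))) hδ0 (le_of_lt hxlt)
        have h1 : DE.σ u ^ s * (1/((r:ℝ)+1)) / DE.σ u ^ s = 1/((r:ℝ)+1) := by
          rw [mul_comm, mul_div_assoc, div_self (ne_of_gt hlam0), mul_one]
        rw [h1] at hd
        exact hd
      have hpre : jstar i <+: jstar (i ++ [u]) := hjmon i u
      set v := (jstar (i ++ [u])).drop (jstar i).length with hvdef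
      have hjs2 : jstar (i ++ [u]) = jstar i ++ v := by
        obtain ⟨t0, ht0⟩ := hpre
        rw [hvdef, ← ht0, List.drop_left]
      have hexact : Λ (i ++ [u]) * Ssum (Wc i)
          = (DF.pr v ^ s * Ssum (Wc (i ++ [u]))) * Λ i := by
        rw [hfact i, hfact (i ++ [u]), hjs2, DustSys.pr_append,
          Real.mul_rpow (le_of_lt (DustSys.pr_pos DF _)) (le_of_lt (DustSys.pr_pos DF _))]
        ring
      have hkey : (wE (i ++ [u]) * DE.σ u ^ s) * Ssum (Wc i)
          = (DF.pr v ^ s * Ssum (Wc (i ++ [u]))) * wE i := by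
        have h5 := hexact
        rw [hΛw i, hΛw (i ++ [u]), hprsplit i u] at h5
        have h6 : ((wE (i ++ [u]) * DE.σ u ^ s) * Ssum (Wc i)) * DE.pr i ^ s
            = ((DF.pr v ^ s * Ssum (Wc (i ++ [u]))) * wE i) * DE.pr i ^ s := by
          linear_combination h5
        exact mul_right_cancel₀ (ne_of_gt (hprs0 i)) h6
      have hvlb : cV ≤ DF.pr v := by
        have h7 := hjlb (i ++ [u])
        have h8 := hjub' i
        have h9 : DF.pr (jstar (i ++ [u])) = DF.pr (jstar i) * DF.pr v := by
          rw [hjs2, DustSys.pr_append]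
        have h10 : DE.pr (i ++ [u]) = DE.pr i * DE.σ u := by
          rw [DustSys.pr_append, DustSys.pr_cons, DustSys.pr_nil, mul_one]
        have hp1 : 0 < DE.pr i := DustSys.pr_pos DE i
        have h11 : (DF.σmin * ε * DE.σ u) * DE.pr i ≤ (C₂ * DF.pr v) * DE.pr i := by
          calc (DF.σmin * ε * DE.σ u) * DE.pr i
              = DF.σmin * (ε * DE.pr (i ++ [u])) := by rw [h10]; ring
            _ ≤ DF.pr (jstar (i ++ [u])) := h7
            _ = DF.pr (jstar i) * DF.pr v := h9
            _ ≤ (C₂ * DE.pr i) * DF.pr v :=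
                mul_le_mul_of_nonneg_right h8 (le_of_lt (DustSys.pr_pos DF v))
            _ = (C₂ * DF.pr v) * DE.pr i := by ring
        have h12 := le_of_mul_le_mul_right h11 hp1
        have h13 : DE.σ u ^ M ≤ DE.σ u := by
          calc DE.σ u ^ M ≤ DE.σ u ^ 1 :=
                pow_le_pow_of_le_one (le_of_lt (DE.hσ0 u)) (le_of_lt (DE.hσ1 u)) (by omega)
            _ = DE.σ u := pow_one _
        rw [hcVdef, hcWdef, div_mul_eq_mul_div, div_le_iff₀ hC₂0]
        calc DF.σmin * ε * DE.σ u ^ M ≤ DF.σmin * ε * DE.σ u :=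
              mul_le_mul_of_nonneg_left h13 (le_of_lt (mul_pos DF.σmin_pos hε0))
          _ ≤ C₂ * DF.pr v := h12
          _ = DF.pr v * C₂ := mul_comm _ _
      have hvlen : v.length ≤ LV := by
        by_contra hlen
        push_neg at hlen
        have h1 : DF.pr v ≤ DF.σmax ^ v.length := DF.pr_le_pow v
        have h2 : DF.σmax ^ v.length ≤ DF.σmax ^ LV :=
          pow_le_pow_of_le_one (le_of_lt DF.σmax_pos) (le_of_lt DF.σmax_lt_one) (by omega)
        linarith
      have hpv0 : 0 < DF.pr v ^ s := Real.rpow_pos_of_pos (DustSys.pr_pos DF v) s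
      have hSW0 : 0 < Ssum (Wc i) := hSpos i
      have hSW1 : 0 < Ssum (Wc (i ++ [u])) := hSpos _
      refine ⟨v, Wc i, Wc (i ++ [u]), hvlen, hWcmem i, hWcmem _, hSW0, hSW1, ?_, ?_⟩
      · calc (DE.σ u ^ s * Ssum (Wc i)) * (Wstar - 1/((r:ℝ)+1))
            ≤ (DE.σ u ^ s * Ssum (Wc i)) * wE (i ++ [u]) :=
              mul_le_mul_of_nonneg_left hb1 (le_of_lt (mul_pos hlam0 hSW0))
          _ = (DF.pr v ^ s * Ssum (Wc (i ++ [u]))) * wE i := by linear_combination hkey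
          _ ≤ (DF.pr v ^ s * Ssum (Wc (i ++ [u]))) * Wstar :=
              mul_le_mul_of_nonneg_left (hWub i) (le_of_lt (mul_pos hpv0 hSW1))
      · calc (DF.pr v ^ s * Ssum (Wc (i ++ [u]))) * (Wstar - 1/((r:ℝ)+1))
            ≤ (DF.pr v ^ s * Ssum (Wc (i ++ [u]))) * wE i :=
              mul_le_mul_of_nonneg_left hb0 (le_of_lt (mul_pos hpv0 hSW1))
          _ = (DE.σ u ^ s * Ssum (Wc i)) * wE (i ++ [u]) := by linear_combination -hkey
          _ ≤ (DE.σ u ^ s * Ssum (Wc i)) * Wstar :=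
              mul_le_mul_of_nonneg_left (hWub _) (le_of_lt (mul_pos hlam0 hSW0))
    choose vf Wf Wf' hvlenf hWmemf hWmemf' hS0f hS1f hineq1 hineq2 using hdata
    obtain ⟨⟨v, W, W'⟩, hfib⟩ := exists_infinite_fiber_finset
      (fun r => (vf r, Wf r, Wf' r))
      ((DF.wordsLE LV) ×ˢ (configs ×ˢ configs)) (fun r => by
        rw [Finset.mem_product, Finset.mem_product, DustSys.mem_wordsLE]
        exact ⟨hvlenf r, hWmemf r, hWmemf' r⟩)
    obtain ⟨r0, hr0⟩ := hfib.nonempty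
    have hr0' : vf r0 = v ∧ Wf r0 = W ∧ Wf' r0 = W' := by
      have h : (vf r0, Wf r0, Wf' r0) = (v, W, W') := hr0
      refine ⟨congrArg Prod.fst h, ?_, ?_⟩
      · exact congrArg Prod.fst (congrArg Prod.snd h)
      · exact congrArg Prod.snd (congrArg Prod.snd h)
    have hSW0 : 0 < Ssum W := by rw [← hr0'.2.1]; exact hS0f r0
    have hSW1 : 0 < Ssum W' := by rw [← hr0'.2.2]; exact hS1f r0
    have hpv0 : 0 < DF.pr v ^ s := Real.rpow_pos_of_pos (DustSys.pr_pos DF v) s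
    have heq : DF.pr v ^ s * Ssum W' = DE.σ u ^ s * Ssum W := by
      apply squeeze_pair (mul_pos hpv0 hSW1) (mul_pos hlam0 hSW0) hW0
      intro ξ hξ
      obtain ⟨N, hN⟩ := exists_nat_gt (1/ξ)
      obtain ⟨r, hrfib, hrN⟩ := hfib.exists_gt N
      have hηξ : 1/((r:ℝ)+1) ≤ ξ := by
        have h1 : (1:ℝ)/ξ < (N:ℝ) + 1 := by
          have : (0:ℝ) ≤ N := Nat.cast_nonneg N
          linarith
        have h2 : ((N:ℝ)+1) ≤ (r:ℝ) + 1 := by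
          have : (N:ℝ) ≤ r := by exact_mod_cast le_of_lt hrN
          linarith
        calc 1/((r:ℝ)+1) ≤ 1/((N:ℝ)+1) := one_div_le_one_div_of_le (by positivity) h2
          _ ≤ ξ := by
              rw [div_le_iff₀ (by positivity)]
              rw [div_lt_iff₀ hξ] at h1
              nlinarith
      have hgr : vf r = v ∧ Wf r = W ∧ Wf' r = W' := by
        have h : (vf r, Wf r, Wf' r) = (v, W, W') := hrfib
        refine ⟨congrArg Prod.fst h, ?_, ?_⟩
        · exact congrArg Prod.fst (congrArg Prod.snd h)
        · exact congrArg Prod.snd (congrArg Prod.snd h)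
      refine ⟨1/((r:ℝ)+1), by positivity, hηξ, ?_, ?_⟩
      · have h := hineq1 r
        rw [hgr.1, hgr.2.1, hgr.2.2] at h
        exact h
      · have h := hineq2 r
        rw [hgr.1, hgr.2.1, hgr.2.2] at h
        exact h
    have hKmem : ∀ w : List (Fin DF.k),
        DF.pr w ^ s ∈ Subfield.closure (Set.range fun j => DF.σ j ^ s) := by
      intro w
      rw [DustSys.pr_rpow_eq_prod]
      apply list_prod_mem
      intro x hx
      obtain ⟨j, -, rfl⟩ := List.mem_map.mp hx
      exact Subfield.subset_closure ⟨j, rfl⟩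
    have hKS : ∀ Wx : Finset (List (Fin DF.k)),
        Ssum Wx ∈ Subfield.closure (Set.range fun j => DF.σ j ^ s) := by
      intro Wx
      rw [hSsumdef]
      exact sum_mem (fun w _ => hKmem w)
    have hlammem : DE.σ u ^ s = (DF.pr v ^ s * Ssum W') / Ssum W := by
      rw [eq_div_iff (ne_of_gt hSW0)]
      linarith [heq]
    rw [hlammem]
    exact div_mem (mul_mem (hKmem v) (hKS W')) (hKS W)
  exact ⟨hfield, hsemigroup⟩

end Key


end FMaux

theorem falconer_marsh
    (d m n : ℕ) (hd : 1 ≤ d)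
    (ρ : Fin m → ℝ) (τ : Fin n → ℝ)
    (hρ : IsContractionVector d m ρ) (hτ : IsContractionVector d n τ)
    (E F : Set (EuclideanSpace ℝ (Fin d)))
    (hE : IsDustLike ρ E) (hF : IsDustLike τ F)
    (hEF : LipschitzEquivalent E F)
    (s : ℝ) (hs : 0 < s)
    (hρs : ∑ j, ρ j ^ s = 1) (hτs : ∑ j, τ j ^ s = 1) :
    Subfield.closure (Set.range fun j => ρ j ^ s)
      = Subfield.closure (Set.range fun j => τ j ^ s) ∧
    ∃ p q : ℕ, 0 < p ∧ 0 < q ∧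
      Subsemigroup.closure (Set.range fun j => ρ j ^ p)
        ≤ Subsemigroup.closure (Set.range fun j => τ j) ∧
      Subsemigroup.closure (Set.range fun j => τ j ^ q)
        ≤ Subsemigroup.closure (Set.range fun j => ρ j) := by
  classical
  obtain ⟨hEne, hEc, φ, hφ, hEu, hEd⟩ := hE
  obtain ⟨hFne, hFc, ψ, hψ, hFu, hFd⟩ := hF
  obtain ⟨f, C, hC, hbij, hlip⟩ := hEF
  let DE : DustSys (EuclideanSpace ℝ (Fin d)) :=
    ⟨m, ρ, E, φ, fun j => (hρ.1 j).1, fun j => (hρ.1 j).2, hEne, hEc,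
      fun j x y => hφ j x y, hEu, hEd⟩
  let DF : DustSys (EuclideanSpace ℝ (Fin d)) :=
    ⟨n, τ, F, ψ, fun j => (hτ.1 j).1, fun j => (hτ.1 j).2, hFne, hFc,
      fun j x y => hψ j x y, hFu, hFd⟩
  have key1 := key DE DF hs hC hρs hτs hbij hlip
  -- the inverse map
  set finv := Function.invFunOn f E with hfinvdef
  have hinv : Set.InvOn finv f E F := hbij.invOn_invFunOn
  have hbij' : Set.BijOn finv F E := Set.BijOn.symm hinv.symm hbij
  have hlip' : ∀ x ∈ F, ∀ y ∈ F,
      C⁻¹ * dist x y ≤ dist (finv x) (finv y) ∧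
      dist (finv x) (finv y) ≤ C * dist x y := by
    intro x hx y hy
    have hxE : finv x ∈ E := hbij'.mapsTo hx
    have hyE : finv y ∈ E := hbij'.mapsTo hy
    have hfx : f (finv x) = x := hinv.2 hx
    have hfy : f (finv y) = y := hinv.2 hy
    obtain ⟨hl, hu⟩ := hlip _ hxE _ hyE
    rw [hfx, hfy] at hl hu
    constructor
    · exact (inv_mul_le_iff₀ hC).mpr hu
    · rw [inv_mul_le_iff₀ hC] at hl
      exact hl
  have key2 := key DF DE hs hC hτs hρs hbij' hlip'
  constructor
  · apply le_antisymm
    · rw [Subfield.closure_le]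
      rintro x ⟨u, rfl⟩
      exact key1.1 u
    · rw [Subfield.closure_le]
      rintro x ⟨u, rfl⟩
      exact key2.1 u
  · choose gE hgE0 hgEmem using key1.2
    choose gF hgF0 hgFmem using key2.2
    refine ⟨∏ u, gE u, ∏ u, gF u,
      Finset.prod_pos (fun u _ => hgE0 u),
      Finset.prod_pos (fun u _ => hgF0 u), ?_, ?_⟩
    · rw [Subsemigroup.closure_le]
      rintro x ⟨u, rfl⟩
      have hsplit : ∏ u', gE u' = gE u * ∏ u' ∈ Finset.univ.erase u, gE u' :=
        (Finset.mul_prod_erase _ _ (Finset.mem_univ u)).symm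
      simp only
      rw [hsplit, pow_mul]
      exact Subsemigroup.pow_mem' _ (hgEmem u)
        (Finset.prod_pos (fun u' _ => hgE0 u'))
    · rw [Subsemigroup.closure_le]
      rintro x ⟨u, rfl⟩
      have hsplit : ∏ u', gF u' = gF u * ∏ u' ∈ Finset.univ.erase u, gF u' :=
        (Finset.mul_prod_erase _ _ (Finset.mem_univ u)).symm
      simp only
      rw [hsplit, pow_mul]
      exact Subsemigroup.pow_mem' _ (hgFmem u)
        (Finset.prod_pos (fun u' _ => hgF0 u'))


end
end

section
/- Let E ⊆ ℝ^d be a dust-like self-similar set, the attractor of similarities φ₁, …, φ_m with ratios ρ₁, …, ρ_m, and let F ⊆ ℝ^d be a dust-like self-similar set, the attractor of similarities ψ₁, …, ψ_n with ratios τ₁, …, τ_n. Let f : E → F be a bi-Lipschitz bijection. Then there exists n₀ ∈ ℕ such that for every finite word i over {1, …, m} there exist a finite word k over {1, …, n} and finitely many finite words j₁, …, j_p over {1, …, n}, each of length at most n₀, such that the cylinders F_{k j₁}, …, F_{k j_p} are pairwise disjoint and f(E_i) = F_{k j₁} ∪ ⋯ ∪ F_{k j_p} ⊆ F_k. -/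
open Set Metric MeasureTheory

noncomputable section

/-- For a finite word `w = i₁⋯i_k`, the composed map `φ_w = φ_{i₁} ∘ ⋯ ∘ φ_{i_k}`
(the identity for the empty word). `wordMap φ w '' E` is the cylinder `E_w`. -/
def wordMap {X : Type*} {m : ℕ} (φ : Fin m → X → X) (w : List (Fin m)) : X → X :=
  w.foldr (fun i g => φ i ∘ g) id
section FMAux
variable {X : Type*} [MetricSpace X] {m : ℕ}

theorem fm_wordMap_nil (φ : Fin m → X → X) : wordMap φ ([] : List (Fin m)) = id := rfl

theorem fm_wordMap_cons (φ : Fin m → X → X) (a : Fin m) (w : List (Fin m)) :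
    wordMap φ (a :: w) = φ a ∘ wordMap φ w := rfl

theorem fm_wordMap_append (φ : Fin m → X → X) (u v : List (Fin m)) :
    wordMap φ (u ++ v) = wordMap φ u ∘ wordMap φ v := by
  induction u with
  | nil => rfl
  | cons a t ih => simp [List.cons_append, fm_wordMap_cons, ih, Function.comp_assoc]

theorem fm_sim_comp {r s : ℝ} {f g : X → X} (hf : IsSimilarity r f) (hg : IsSimilarity s g) :
    IsSimilarity (r * s) (f ∘ g) := fun x y => by
  simp only [Function.comp_apply]
  rw [hf, hg, mul_assoc]

theorem fm_sim_id : IsSimilarity (1 : ℝ) (id : X → X) := fun x y => (one_mul _).symm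

theorem fm_wordMap_sim {ρ : Fin m → ℝ} {φ : Fin m → X → X}
    (hφ : ∀ j, IsSimilarity (ρ j) (φ j)) (w : List (Fin m)) :
    IsSimilarity ((w.map ρ).prod) (wordMap φ w) := by
  induction w with
  | nil => simpa [fm_wordMap_nil] using fm_sim_id
  | cons a t ih => simpa [fm_wordMap_cons] using fm_sim_comp (hφ a) ih

theorem fm_sim_injective {r : ℝ} {f : X → X} (hr : 0 < r) (hf : IsSimilarity r f) :
    Function.Injective f := by
  intro x y h
  have h2 := hf x y
  rw [h, dist_self] at h2
  have : dist x y = 0 := by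
    rcases mul_eq_zero.1 h2.symm with h3 | h3
    · exact absurd h3 hr.ne'
    · exact h3
  exact dist_eq_zero.1 this

theorem fm_prod_pos {ρ : Fin m → ℝ} (h : ∀ j, 0 < ρ j) (w : List (Fin m)) :
    0 < (w.map ρ).prod := by
  induction w with
  | nil => simp
  | cons a t ih => simpa using mul_pos (h a) ih

theorem fm_prod_le_one {ρ : Fin m → ℝ} (h0 : ∀ j, 0 < ρ j) (h1 : ∀ j, ρ j ≤ 1)
    (w : List (Fin m)) : (w.map ρ).prod ≤ 1 := by
  induction w with
  | nil => simp
  | cons a t ih =>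
    simpa using mul_le_one₀ (h1 a) (fm_prod_pos h0 t).le ih

theorem fm_prod_le_pow {ρ : Fin m → ℝ} {M : ℝ} (hM : 0 ≤ M) (h0 : ∀ j, 0 < ρ j)
    (h1 : ∀ j, ρ j ≤ M)
    (w : List (Fin m)) : (w.map ρ).prod ≤ M ^ w.length := by
  induction w with
  | nil => simp
  | cons a t ih =>
    simp only [List.map_cons, List.prod_cons, List.length_cons, pow_succ]
    rw [mul_comm (M ^ t.length) M]
    exact mul_le_mul (h1 a) ih (fm_prod_pos h0 t).le hM

theorem fm_cyl_subset {φ : Fin m → X → X} {E : Set X} (hEdef : E = ⋃ j, φ j '' E)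
    (w : List (Fin m)) : wordMap φ w '' E ⊆ E := by
  induction w with
  | nil => simp [fm_wordMap_nil]
  | cons a t ih =>
    rw [fm_wordMap_cons, Set.image_comp]
    refine (Set.image_mono ih).trans ?_
    intro x hx
    rw [hEdef]
    exact Set.mem_iUnion.2 ⟨a, hx⟩

theorem fm_gap2 {K L : Set X} (hK : IsCompact K) (hL : IsCompact L)
    (h : Disjoint K L) : ∃ c > 0, ∀ x ∈ K, ∀ y ∈ L, c ≤ dist x y := by
  rcases L.eq_empty_or_nonempty with rfl | hLne
  · exact ⟨1, one_pos, by simp⟩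
  rcases K.eq_empty_or_nonempty with rfl | hKne
  · exact ⟨1, one_pos, by simp⟩
  obtain ⟨x, hxK, hmin⟩ := hK.exists_isMinOn hKne (continuous_infDist_pt L).continuousOn
  have hx : 0 < infDist x L :=
    (hL.isClosed.notMem_iff_infDist_pos hLne).mp (fun hx => h.le_bot ⟨hxK, hx⟩)
  refine ⟨infDist x L, hx, fun a ha b hb => ?_⟩
  calc infDist x L ≤ infDist a L := hmin ha
    _ ≤ dist a b := infDist_le_dist_of_mem hb

theorem fm_family_gap {ι : Type*} [Fintype ι] (K : ι → Set X) (hK : ∀ j, IsCompact (K j))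
    (hdisj : Pairwise fun j k => Disjoint (K j) (K k)) :
    ∃ c > 0, ∀ j k, j ≠ k → ∀ x ∈ K j, ∀ y ∈ K k, c ≤ dist x y := by
  classical
  have H : ∀ p : ι × ι, ∃ c, 0 < c ∧ (p.1 ≠ p.2 → ∀ x ∈ K p.1, ∀ y ∈ K p.2, c ≤ dist x y) := by
    intro p
    by_cases h : p.1 = p.2
    · exact ⟨1, one_pos, fun hne => absurd h hne⟩
    · obtain ⟨c, hc, hcd⟩ := fm_gap2 (hK p.1) (hK p.2) (hdisj h)
      exact ⟨c, hc, fun _ => hcd⟩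
  choose c hc hcd using H
  rcases isEmpty_or_nonempty ι with h | h
  · exact ⟨1, one_pos, fun j => isEmptyElim j⟩
  refine ⟨Finset.univ.inf' Finset.univ_nonempty c, ?_, ?_⟩
  · exact (Finset.lt_inf'_iff _).2 fun p _ => hc p
  · intro j k hjk x hx y hy
    exact le_trans (Finset.inf'_le _ (Finset.mem_univ (j, k))) (hcd (j, k) hjk x hx y hy)

end FMAux

set_option linter.unusedSectionVars false
section FMAux2
variable {X : Type*} [MetricSpace X] {n : ℕ}

theorem fm_ofFn_succ {N : ℕ} (w : Fin (N + 1) → Fin n) :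
    List.ofFn w = w 0 :: List.ofFn (Fin.tail w) := by
  simp [List.ofFn_succ]; rfl

theorem fm_decompN {ψ : Fin n → X → X} {F : Set X} (hFdef : F = ⋃ j, ψ j '' F) (N : ℕ) :
    F = ⋃ w : Fin N → Fin n, wordMap ψ (List.ofFn w) '' F := by
  induction N with
  | zero =>
    ext x
    simp only [Set.mem_iUnion]
    constructor
    · intro hx; exact ⟨Fin.elim0, by simpa [List.ofFn_zero, fm_wordMap_nil] using hx⟩
    · rintro ⟨w, hw⟩; simpa [List.ofFn_zero, fm_wordMap_nil] using hw
  | succ N ih =>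
    ext x
    simp only [Set.mem_iUnion]
    constructor
    · intro hx
      rw [hFdef] at hx
      obtain ⟨j, y, hy, rfl⟩ := Set.mem_iUnion.1 hx
      rw [ih] at hy
      obtain ⟨w, z, hz, rfl⟩ := Set.mem_iUnion.1 hy
      refine ⟨Fin.cons j w, ?_⟩
      have : List.ofFn (Fin.cons j w : Fin (N + 1) → Fin n) = j :: List.ofFn w := by
        rw [fm_ofFn_succ]; simp [Fin.tail]
      rw [this, fm_wordMap_cons, Set.image_comp]
      exact Set.mem_image_of_mem _ (Set.mem_image_of_mem _ hz)
    · rintro ⟨w, hw⟩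
      exact fm_cyl_subset hFdef _ hw

theorem fm_cyl_disjoint {τ : Fin n → ℝ} {ψ : Fin n → X → X} {F : Set X}
    (hτpos : ∀ j, 0 < τ j) (hψ : ∀ j, IsSimilarity (τ j) (ψ j))
    (hFdef : F = ⋃ j, ψ j '' F)
    (hFdisj : Pairwise fun j k => Disjoint (ψ j '' F) (ψ k '' F)) :
    ∀ (N : ℕ) (w w' : Fin N → Fin n), w ≠ w' →
      Disjoint (wordMap ψ (List.ofFn w) '' F) (wordMap ψ (List.ofFn w') '' F) := by
  intro N
  induction N with
  | zero => intro w w' h; exact absurd (funext fun i => i.elim0) h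
  | succ N ih =>
    intro w w' h
    have hofn : ∀ v : Fin (N + 1) → Fin n, wordMap ψ (List.ofFn v) '' F
        = ψ (v 0) '' (wordMap ψ (List.ofFn (Fin.tail v)) '' F) := by
      intro v
      rw [fm_ofFn_succ, fm_wordMap_cons, Set.image_comp]
    by_cases h0 : w 0 = w' 0
    · have ht : Fin.tail w ≠ Fin.tail w' := by
        intro hte
        apply h
        funext i
        rcases Fin.eq_zero_or_eq_succ i with rfl | ⟨i', rfl⟩
        · exact h0
        · exact congrFun hte i'
      rw [hofn w, hofn w', h0]
      exact (Set.disjoint_image_iff (fm_sim_injective (hτpos _) (hψ _))).2 (ih _ _ ht)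
    · rw [hofn w, hofn w']
      exact (hFdisj h0).mono (Set.image_mono (fm_cyl_subset hFdef _))
        (Set.image_mono (fm_cyl_subset hFdef _))

variable {m : ℕ}

theorem fm_gap_cyl {ρ : Fin m → ℝ} {φ : Fin m → X → X} {E : Set X}
    (hρpos : ∀ j, 0 < ρ j) (hρle : ∀ j, ρ j ≤ 1)
    (hφ : ∀ j, IsSimilarity (ρ j) (φ j)) (hEdef : E = ⋃ j, φ j '' E)
    {c : ℝ} (hc0 : 0 < c)
    (hc : ∀ j k, j ≠ k → ∀ x ∈ φ j '' E, ∀ y ∈ φ k '' E, c ≤ dist x y) :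
    ∀ w : List (Fin m), ∀ x ∈ wordMap φ w '' E, ∀ y ∈ E, y ∉ wordMap φ w '' E →
      c * (w.map ρ).prod ≤ dist x y := by
  intro w
  induction w with
  | nil => intro x hx y hy hyn; exact absurd (by simpa [fm_wordMap_nil] using hy) hyn
  | cons a t ih =>
    intro x hx y hy hyn
    rw [fm_wordMap_cons, Set.image_comp] at hx hyn
    obtain ⟨x', hx', rfl⟩ := hx
    by_cases hya : y ∈ φ a '' E
    · obtain ⟨y', hy', rfl⟩ := hya
      have hy'n : y' ∉ wordMap φ t '' E := fun hmem => hyn (Set.mem_image_of_mem _ hmem)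
      have hd := ih x' hx' y' hy' hy'n
      have heq : dist (φ a x') (φ a y') = ρ a * dist x' y' := hφ a x' y'
      rw [heq]
      calc c * ((a :: t).map ρ).prod = ρ a * (c * (t.map ρ).prod) := by
            simp [List.map_cons, List.prod_cons]; ring
        _ ≤ ρ a * dist x' y' := mul_le_mul_of_nonneg_left hd (hρpos a).le
    · rw [hEdef] at hy
      obtain ⟨b, hyb⟩ := Set.mem_iUnion.1 hy
      have hab : a ≠ b := fun h => hya (h ▸ hyb)
      have hxa : φ a x' ∈ φ a '' E := Set.mem_image_of_mem _ (fm_cyl_subset hEdef t hx')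
      refine le_trans ?_ (hc a b hab _ hxa _ hyb)
      exact mul_le_of_le_one_right hc0.le (fm_prod_le_one hρpos hρle _)

end FMAux2

theorem fm_sim_continuous {X : Type*} [MetricSpace X] {r : ℝ} {f : X → X} (hr : 0 ≤ r)
    (hf : IsSimilarity r f) : Continuous f := by
  have h : LipschitzWith r.toNNReal f := LipschitzWith.of_dist_le_mul fun x y => by
    rw [hf, Real.coe_toNNReal r hr]
  exact h.continuous

theorem falconer_marsh_fundamental_lemma
    (d m n : ℕ) (hd : 1 ≤ d)
    (ρ : Fin m → ℝ) (τ : Fin n → ℝ)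
    (hρ : IsContractionVector d m ρ) (hτ : IsContractionVector d n τ)
    (E F : Set (EuclideanSpace ℝ (Fin d)))
    (hEne : E.Nonempty) (hEcomp : IsCompact E)
    (φ : Fin m → EuclideanSpace ℝ (Fin d) → EuclideanSpace ℝ (Fin d))
    (hφ : ∀ j, IsSimilarity (ρ j) (φ j))
    (hEdef : E = ⋃ j, φ j '' E)
    (hEdisj : Pairwise fun j k => Disjoint (φ j '' E) (φ k '' E))
    (hFne : F.Nonempty) (hFcomp : IsCompact F)
    (ψ : Fin n → EuclideanSpace ℝ (Fin d) → EuclideanSpace ℝ (Fin d))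
    (hψ : ∀ j, IsSimilarity (τ j) (ψ j))
    (hFdef : F = ⋃ j, ψ j '' F)
    (hFdisj : Pairwise fun j k => Disjoint (ψ j '' F) (ψ k '' F))
    (f : EuclideanSpace ℝ (Fin d) → EuclideanSpace ℝ (Fin d)) (C : ℝ) (hC : 0 < C)
    (hbij : Set.BijOn f E F)
    (hlip : ∀ x ∈ E, ∀ y ∈ E,
      C⁻¹ * dist x y ≤ dist (f x) (f y) ∧ dist (f x) (f y) ≤ C * dist x y) :
    ∃ n₀ : ℕ, ∀ i : List (Fin m), i ≠ [] →
      ∃ (k : List (Fin n)) (p : ℕ) (js : Fin p → List (Fin n)),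
        (∀ r, (js r).length ≤ n₀) ∧
        (Pairwise fun r r' =>
          Disjoint (wordMap ψ (k ++ js r) '' F) (wordMap ψ (k ++ js r') '' F)) ∧
        f '' (wordMap φ i '' E) = ⋃ r, wordMap ψ (k ++ js r) '' F ∧
        f '' (wordMap φ i '' E) ⊆ wordMap ψ k '' F := by
  classical
  by_cases hsub : E.Subsingleton
  · refine ⟨0, fun i _ => ?_⟩
    obtain ⟨e, he⟩ := hEne
    have hEe : E = {e} := hsub.eq_singleton_of_mem he
    have h1 : wordMap φ i '' E = {e} := by
      apply Set.Subset.antisymm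
      · exact (fm_cyl_subset hEdef i).trans hEe.subset
      · intro x hx
        have hx' : x = e := hx
        have hmem : wordMap φ i e ∈ E := fm_cyl_subset hEdef i (Set.mem_image_of_mem _ he)
        rw [hEe, Set.mem_singleton_iff] at hmem
        exact ⟨e, he, hmem.trans hx'.symm⟩
    have h2 : f '' {e} = F := by rw [← hbij.image_eq, hEe]
    refine ⟨[], 1, fun _ => [], fun r => le_refl 0, ?_, ?_, ?_⟩
    · intro r r' hrr'; exact absurd (Subsingleton.elim r r') hrr'
    · rw [h1, h2]
      simp [fm_wordMap_nil, Set.iUnion_const]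
    · rw [h1, h2, fm_wordMap_nil, Set.image_id]
  rw [Set.not_subsingleton_iff] at hsub
  obtain ⟨x₀, hx₀, y₀, hy₀, hxy₀⟩ := hsub
  have hρpos : ∀ j, 0 < ρ j := fun j => (hρ.1 j).1
  have hρle : ∀ j, ρ j ≤ 1 := fun j => (hρ.1 j).2.le
  have hτpos : ∀ j, 0 < τ j := fun j => (hτ.1 j).1
  have hτlt : ∀ j, τ j < 1 := fun j => (hτ.1 j).2
  have hn : 0 < n := by
    rcases Nat.eq_zero_or_pos n with rfl | h
    · exfalso; rw [hFdef] at hFne; simpa using hFne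
    · exact h
  have huniv : (Finset.univ : Finset (Fin n)).Nonempty := ⟨⟨0, hn⟩, Finset.mem_univ _⟩
  set τmax : ℝ := Finset.univ.sup' huniv τ with hτmax_def
  have hτmax_le : ∀ j, τ j ≤ τmax := fun j => Finset.le_sup' τ (Finset.mem_univ j)
  have hτmax_pos : 0 < τmax := lt_of_lt_of_le (hτpos ⟨0, hn⟩) (hτmax_le _)
  have hτmax_lt1 : τmax < 1 := (Finset.sup'_lt_iff huniv).2 fun j _ => hτlt j
  have hDb := hEcomp.isBounded
  have hDFb := hFcomp.isBounded
  set D := diam E with hD_def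
  set DF := diam F with hDF_def
  have hD0 : 0 < D := by
    have h1 := dist_le_diam_of_mem hDb hx₀ hy₀
    have h2 : 0 < dist x₀ y₀ := dist_pos.2 hxy₀
    linarith
  have hDF0 : 0 < DF := by
    have hfx : f x₀ ∈ F := hbij.mapsTo hx₀
    have hfy : f y₀ ∈ F := hbij.mapsTo hy₀
    have hne : f x₀ ≠ f y₀ := fun h => hxy₀ (hbij.injOn hx₀ hy₀ h)
    have h1 := dist_le_diam_of_mem hDFb hfx hfy
    have h2 : 0 < dist (f x₀) (f y₀) := dist_pos.2 hne
    linarith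
  obtain ⟨cE, hcE0, hcE⟩ := fm_family_gap (fun j => φ j '' E)
    (fun j => hEcomp.image (fm_sim_continuous (hρpos j).le (hφ j))) hEdisj
  obtain ⟨cF, hcF0, hcF⟩ := fm_family_gap (fun j => ψ j '' F)
    (fun j => hFcomp.image (fm_sim_continuous (hτpos j).le (hψ j))) hFdisj
  set ε := (cE * cF) / (C * C * D * DF) with hε_def
  have hε0 : 0 < ε := by positivity
  obtain ⟨N, hN⟩ := exists_pow_lt_of_lt_one hε0 hτmax_lt1
  refine ⟨N, fun i _ => ?_⟩
  set ρi := (i.map ρ).prod with hρi_def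
  have hρi0 : 0 < ρi := fm_prod_pos hρpos i
  set A := f '' (wordMap φ i '' E) with hA_def
  have hEi_sub : wordMap φ i '' E ⊆ E := fm_cyl_subset hEdef i
  have hA_subF : A ⊆ F := by rw [hA_def, ← hbij.image_eq]; exact Set.image_mono hEi_sub
  have hA_dist : ∀ a ∈ A, ∀ b ∈ A, dist a b ≤ C * (ρi * D) := by
    intro a ha b hb
    rw [hA_def] at ha hb
    obtain ⟨p, hp, rfl⟩ := ha
    obtain ⟨q, hq, rfl⟩ := hb
    have h1 : dist (f p) (f q) ≤ C * dist p q := (hlip p (hEi_sub hp) q (hEi_sub hq)).2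
    have h2 : dist p q ≤ ρi * D := by
      obtain ⟨p', hp', rfl⟩ := hp
      obtain ⟨q', hq', rfl⟩ := hq
      rw [fm_wordMap_sim hφ i p' q']
      exact mul_le_mul_of_nonneg_left (dist_le_diam_of_mem hDb hp' hq') hρi0.le
    calc dist (f p) (f q) ≤ C * dist p q := h1
      _ ≤ C * (ρi * D) := mul_le_mul_of_nonneg_left h2 hC.le
  have hA_gap : ∀ a ∈ A, ∀ b ∈ F, b ∉ A → C⁻¹ * (cE * ρi) ≤ dist a b := by
    intro a ha b hbF hbA
    rw [hA_def] at ha hbA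
    obtain ⟨p, hp, rfl⟩ := ha
    rw [← hbij.image_eq] at hbF
    obtain ⟨q, hq, rfl⟩ := hbF
    have hqn : q ∉ wordMap φ i '' E := fun hmem => hbA (Set.mem_image_of_mem f hmem)
    have h1 : cE * ρi ≤ dist p q := fm_gap_cyl hρpos hρle hφ hEdef hcE0 hcE i p hp q hq hqn
    have h2 := (hlip p (hEi_sub hp) q hq).1
    calc C⁻¹ * (cE * ρi) ≤ C⁻¹ * dist p q :=
          mul_le_mul_of_nonneg_left h1 (inv_pos.2 hC).le
      _ ≤ dist (f p) (f q) := h2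
  have ha₁ : f (wordMap φ i x₀) ∈ A := Set.mem_image_of_mem f (Set.mem_image_of_mem _ hx₀)
  have ha₂ : f (wordMap φ i y₀) ∈ A := Set.mem_image_of_mem f (Set.mem_image_of_mem _ hy₀)
  have hwinj : Function.Injective (wordMap φ i) :=
    fm_sim_injective (fm_prod_pos hρpos i) (fm_wordMap_sim hφ i)
  have ha_ne : f (wordMap φ i x₀) ≠ f (wordMap φ i y₀) := by
    intro h
    exact hxy₀ (hwinj (hbij.injOn (hEi_sub (Set.mem_image_of_mem _ hx₀))
      (hEi_sub (Set.mem_image_of_mem _ hy₀)) h))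
  set e := dist (f (wordMap φ i x₀)) (f (wordMap φ i y₀)) with he_def
  have he0 : 0 < e := dist_pos.2 ha_ne
  obtain ⟨L₀, hL₀⟩ := exists_pow_lt_of_lt_one (div_pos he0 hDF0) hτmax_lt1
  have hlen : ∀ k : List (Fin n), A ⊆ wordMap ψ k '' F → k.length ≤ L₀ := by
    intro k hk
    have h1 : e ≤ (k.map τ).prod * DF := by
      obtain ⟨u, hu, hu'⟩ := hk ha₁
      obtain ⟨v, hv, hv'⟩ := hk ha₂
      rw [he_def, ← hu', ← hv', fm_wordMap_sim hψ k u v]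
      exact mul_le_mul_of_nonneg_left (dist_le_diam_of_mem hDFb hu hv)
        (fm_prod_pos hτpos k).le
    have h2 : (k.map τ).prod ≤ τmax ^ k.length := fm_prod_le_pow hτmax_pos.le hτpos hτmax_le k
    by_contra hcon
    push_neg at hcon
    have h3 : τmax ^ k.length ≤ τmax ^ L₀ :=
      pow_le_pow_of_le_one hτmax_pos.le hτmax_lt1.le hcon.le
    have h4 : e / DF ≤ (k.map τ).prod := (div_le_iff₀ hDF0).2 h1
    linarith
  set P : ℕ → Prop := fun l => ∃ k : List (Fin n), k.length = l ∧ A ⊆ wordMap ψ k '' F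
    with hP_def
  have hP0 : P 0 := ⟨[], rfl, by rw [fm_wordMap_nil]; simpa using hA_subF⟩
  have hPle : ∀ l, P l → l ≤ L₀ := by rintro l ⟨k, rfl, hk⟩; exact hlen k hk
  have hPl₀ : P (Nat.findGreatest P L₀) := Nat.findGreatest_spec (Nat.zero_le L₀) hP0
  obtain ⟨k, hk_len, hkA⟩ := hPl₀
  have hmax : ∀ j : Fin n, ¬ A ⊆ wordMap ψ (k ++ [j]) '' F := by
    intro j hj
    have hP' : P (Nat.findGreatest P L₀ + 1) := ⟨k ++ [j], by simp [hk_len], hj⟩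
    have := Nat.le_findGreatest (hPle _ hP') hP'
    omega
  have hcyl_app : ∀ (u : List (Fin n)) (j : Fin n),
      wordMap ψ (u ++ [j]) '' F = wordMap ψ u '' (ψ j '' F) := by
    intro u j
    rw [fm_wordMap_append, Set.image_comp]
    rfl
  have hchild : wordMap ψ k '' F = ⋃ j, wordMap ψ (k ++ [j]) '' F := by
    conv_lhs => rw [hFdef, Set.image_iUnion]
    exact (Set.iUnion_congr fun j => (hcyl_app k j).symm)
  set τk := (k.map τ).prod with hτk_def
  have hτk0 : 0 < τk := fm_prod_pos hτpos k
  have hsimk := fm_wordMap_sim hψ k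
  have hτk_le : τk * cF ≤ C * (ρi * D) := by
    have hA1 : f (wordMap φ i x₀) ∈ ⋃ j, wordMap ψ (k ++ [j]) '' F := by
      rw [← hchild]; exact hkA ha₁
    obtain ⟨j₁, hj₁⟩ := Set.mem_iUnion.1 hA1
    obtain ⟨a', ha'A, ha'n⟩ := Set.not_subset.1 (hmax j₁)
    have ha'mem : a' ∈ ⋃ j, wordMap ψ (k ++ [j]) '' F := by
      rw [← hchild]; exact hkA ha'A
    obtain ⟨j₂, hj₂⟩ := Set.mem_iUnion.1 ha'mem
    have hj12 : j₁ ≠ j₂ := fun h => ha'n (h ▸ hj₂)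
    rw [hcyl_app] at hj₁ hj₂
    obtain ⟨u, hu, hu'⟩ := hj₁
    obtain ⟨v, hv, hv'⟩ := hj₂
    have hd : τk * cF ≤ dist (f (wordMap φ i x₀)) a' := by
      rw [← hu', ← hv', hsimk u v]
      exact mul_le_mul_of_nonneg_left (hcF j₁ j₂ hj12 u hu v hv) hτk0.le
    exact le_trans hd (hA_dist _ ha₁ _ ha'A)
  have hsmall : τk * (τmax ^ N * DF) < C⁻¹ * (cE * ρi) := by
    have h1 : τk ≤ C * (ρi * D) / cF := (le_div_iff₀ hcF0).2 hτk_le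
    calc τk * (τmax ^ N * DF) ≤ (C * (ρi * D) / cF) * (τmax ^ N * DF) :=
          mul_le_mul_of_nonneg_right h1 (by positivity)
      _ < (C * (ρi * D) / cF) * (ε * DF) := by
          apply mul_lt_mul_of_pos_left ?_ (by positivity)
          exact mul_lt_mul_of_pos_right hN hDF0
      _ = C⁻¹ * (cE * ρi) := by
          rw [hε_def]
          field_simp
  have hkey : ∀ w : Fin N → Fin n,
      (wordMap ψ (k ++ List.ofFn w) '' F ∩ A).Nonempty →
      wordMap ψ (k ++ List.ofFn w) '' F ⊆ A := by
    rintro w ⟨y, hycyl, hyA⟩ x hxcyl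
    by_contra hxA
    have hxF : x ∈ F := fm_cyl_subset hFdef _ hxcyl
    have hgap := hA_gap y hyA x hxF hxA
    obtain ⟨x', hx', rfl⟩ := hxcyl
    obtain ⟨y', hy', rfl⟩ := hycyl
    have hsim := fm_wordMap_sim hψ (k ++ List.ofFn w)
    have hdxy : dist (wordMap ψ (k ++ List.ofFn w) y') (wordMap ψ (k ++ List.ofFn w) x')
        ≤ τk * (τmax ^ N * DF) := by
      rw [hsim]
      have hb : dist y' x' ≤ DF := dist_le_diam_of_mem hDFb hy' hx'
      have hw : ((List.ofFn w).map τ).prod ≤ τmax ^ N := by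
        have h5 := fm_prod_le_pow hτmax_pos.le hτpos hτmax_le (List.ofFn w)
        simpa [List.length_ofFn] using h5
      have hprod : ((k ++ List.ofFn w).map τ).prod = τk * ((List.ofFn w).map τ).prod := by
        rw [List.map_append, List.prod_append]
      rw [hprod, mul_assoc]
      refine mul_le_mul_of_nonneg_left ?_ hτk0.le
      exact mul_le_mul hw hb dist_nonneg (by positivity)
    linarith
  set T : Finset (Fin N → Fin n) := Finset.univ.filter
    (fun w => (wordMap ψ (k ++ List.ofFn w) '' F ∩ A).Nonempty) with hT_def
  have hinjk : Function.Injective (wordMap ψ k) := fm_sim_injective hτk0 hsimk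
  have hmemT : ∀ w : Fin N → Fin n,
      w ∈ T ↔ (wordMap ψ (k ++ List.ofFn w) '' F ∩ A).Nonempty := by
    intro w
    rw [hT_def]
    simp only [Finset.mem_filter, Finset.mem_univ, true_and]
  refine ⟨k, T.card, fun r => List.ofFn ((T.equivFin.symm r : T) : Fin N → Fin n),
    fun r => by simp [List.length_ofFn], ?_, ?_, hkA⟩
  · intro r r' hrr'
    have hval : ((T.equivFin.symm r : T) : Fin N → Fin n)
        ≠ ((T.equivFin.symm r' : T) : Fin N → Fin n) :=
      fun h => hrr' (T.equivFin.symm.injective (Subtype.ext h))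
    have hdisj := fm_cyl_disjoint hτpos hψ hFdef hFdisj N _ _ hval
    rw [fm_wordMap_append, fm_wordMap_append, Set.image_comp, Set.image_comp]
    exact (Set.disjoint_image_iff hinjk).2 hdisj
  · apply Set.Subset.antisymm
    · intro a haA
      have hak : a ∈ wordMap ψ k '' F := hkA haA
      obtain ⟨b, hbF, rfl⟩ := hak
      rw [fm_decompN hFdef N] at hbF
      obtain ⟨w, hw⟩ := Set.mem_iUnion.1 hbF
      have hmem : wordMap ψ k b ∈ wordMap ψ (k ++ List.ofFn w) '' F := by
        rw [fm_wordMap_append, Set.image_comp]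
        exact Set.mem_image_of_mem _ hw
      have hwT : w ∈ T := (hmemT w).2 ⟨wordMap ψ k b, hmem, haA⟩
      refine Set.mem_iUnion.2 ⟨T.equivFin ⟨w, hwT⟩, ?_⟩
      simpa only [Equiv.symm_apply_apply] using hmem
    · refine Set.iUnion_subset fun r => ?_
      have hrT := (hmemT _).1 (T.equivFin.symm r).2
      exact hkey _ hrT
end
end

section
/- Let E, F ⊆ ℝ^d be dust-like self-similar sets with contraction vectors ρ = (ρ₁, …, ρ_m) and τ = (τ₁, …, τ_n) respectively, let f : E → F be a bi-Lipschitz bijection, and let s be their common Hausdorff dimension. For k ≥ 1 define g_k : E → ℝ by g_k(x) = H^s(f(E_i)) / H^s(E_i), where i is the unique word of length k over {1, …, m} with x ∈ E_i. Then the set { g_{k+1}(x) / g_k(x) : x ∈ E, k ≥ 1 } is finite. -/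
open Set Metric MeasureTheory
open scoped ENNReal NNReal

noncomputable section

set_option linter.unusedSectionVars false
namespace AuxRSM

variable {X : Type*} [MetricSpace X]

lemma sim_injective {r : ℝ} {g : X → X} (hr : 0 < r) (hg : IsSimilarity r g) :
    Function.Injective g := by
  intro x y hxy
  have h := hg x y
  rw [hxy, dist_self] at h
  have : dist x y = 0 := by
    have := dist_nonneg (x := x) (y := y)
    nlinarith
  exact dist_eq_zero.mp this

lemma sim_lipschitzOnWith {r : ℝ} {g : X → X} (hr : 0 ≤ r) (hg : IsSimilarity r g)
    (A : Set X) : LipschitzOnWith r.toNNReal g A := by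
  rw [lipschitzOnWith_iff_dist_le_mul]
  intro x _ y _
  rw [hg x y, Real.coe_toNNReal _ hr]

lemma sim_continuous {r : ℝ} {g : X → X} (hr : 0 ≤ r) (hg : IsSimilarity r g) :
    Continuous g := by
  rw [← continuousOn_univ]
  exact (sim_lipschitzOnWith hr hg univ).continuousOn

lemma hausdorff_image_sim [MeasurableSpace X] [BorelSpace X] [Nonempty X]
    {r : ℝ} (hr : 0 < r) {g : X → X} (hg : IsSimilarity r g) {s : ℝ} (hs : 0 ≤ s)
    (A : Set X) :
    μH[s] (g '' A) = (r.toNNReal : ℝ≥0∞) ^ s * μH[s] A := by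
  have hinj := sim_injective hr hg
  have h1 : μH[s] (g '' A) ≤ (r.toNNReal : ℝ≥0∞) ^ s * μH[s] A :=
    (sim_lipschitzOnWith hr.le hg A).hausdorffMeasure_image_le hs
  have hg'lip : LipschitzOnWith (r⁻¹).toNNReal (Function.invFun g) (g '' A) := by
    rw [lipschitzOnWith_iff_dist_le_mul]
    rintro x ⟨a, _, rfl⟩ y ⟨b, _, rfl⟩
    rw [Function.leftInverse_invFun hinj a, Function.leftInverse_invFun hinj b, hg a b,
      Real.coe_toNNReal _ (inv_nonneg.mpr hr.le), ← mul_assoc, inv_mul_cancel₀ hr.ne',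
      one_mul]
  have hA : A ⊆ Function.invFun g '' (g '' A) := fun a ha =>
    ⟨g a, ⟨a, ha, rfl⟩, Function.leftInverse_invFun hinj a⟩
  have h2 : μH[s] A ≤ ((r⁻¹).toNNReal : ℝ≥0∞) ^ s * μH[s] (g '' A) :=
    le_trans (measure_mono hA) (hg'lip.hausdorffMeasure_image_le hs)
  have hcancel : (r.toNNReal : ℝ≥0∞) ^ s * ((r⁻¹).toNNReal : ℝ≥0∞) ^ s = 1 := by
    rw [← ENNReal.mul_rpow_of_ne_top ENNReal.coe_ne_top ENNReal.coe_ne_top,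
      ← ENNReal.coe_mul, ← Real.toNNReal_mul hr.le, mul_inv_cancel₀ hr.ne']
    simp
  refine le_antisymm h1 ?_
  calc (r.toNNReal : ℝ≥0∞) ^ s * μH[s] A
      ≤ (r.toNNReal : ℝ≥0∞) ^ s * (((r⁻¹).toNNReal : ℝ≥0∞) ^ s * μH[s] (g '' A)) := by
        exact mul_le_mul_right h2 _
    _ = μH[s] (g '' A) := by rw [← mul_assoc, hcancel, one_mul]


section Words

variable {m : ℕ} {φ : Fin m → X → X} {ρ : Fin m → ℝ} {E : Set X}

lemma wordMap_nil : wordMap φ ([] : List (Fin m)) = id := rfl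

lemma wordMap_cons (a : Fin m) (w : List (Fin m)) :
    wordMap φ (a :: w) = φ a ∘ wordMap φ w := rfl

lemma wordMap_append (u v : List (Fin m)) :
    wordMap φ (u ++ v) = wordMap φ u ∘ wordMap φ v := by
  induction u with
  | nil => rfl
  | cons a t ih => simp only [List.cons_append, wordMap_cons, ih]; rfl

lemma wordMap_singleton (a : Fin m) : wordMap φ [a] = φ a := by
  funext x; rfl

lemma wordMap_sim (hφ : ∀ j, IsSimilarity (ρ j) (φ j)) (w : List (Fin m)) :
    IsSimilarity ((w.map ρ).prod) (wordMap φ w) := by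
  induction w with
  | nil => intro x y; simp [wordMap_nil]
  | cons a t ih =>
    intro x y
    simp only [wordMap_cons, Function.comp_apply, List.map_cons, List.prod_cons]
    rw [hφ a _ _, ih x y, mul_assoc]

lemma prod_map_pos (hρ : ∀ j, 0 < ρ j) (w : List (Fin m)) : 0 < (w.map ρ).prod := by
  apply List.prod_pos
  intro a ha
  obtain ⟨j, _, rfl⟩ := List.mem_map.mp ha
  exact hρ j

lemma prod_map_le_pow {q : ℝ} (hq : 0 ≤ q) (hρ : ∀ j, 0 < ρ j) (hρq : ∀ j, ρ j ≤ q)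
    (w : List (Fin m)) : (w.map ρ).prod ≤ q ^ w.length := by
  induction w with
  | nil => simp
  | cons a t ih =>
    simp only [List.map_cons, List.prod_cons, List.length_cons, pow_succ]
    rw [mul_comm (q ^ t.length) q]
    exact mul_le_mul (hρq a) ih (prod_map_pos hρ t).le hq

lemma prod_map_le_one (hρ : ∀ j, 0 < ρ j) (hρ1 : ∀ j, ρ j ≤ 1) (w : List (Fin m)) :
    (w.map ρ).prod ≤ 1 := by
  simpa using prod_map_le_pow zero_le_one hρ hρ1 w

lemma piece_subset (hEdef : E = ⋃ j, φ j '' E) (j : Fin m) : φ j '' E ⊆ E := by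
  conv_rhs => rw [hEdef]
  exact subset_iUnion (fun j => φ j '' E) j

lemma cyl_subset (hEdef : E = ⋃ j, φ j '' E) (w : List (Fin m)) :
    wordMap φ w '' E ⊆ E := by
  induction w with
  | nil => simp [wordMap_nil]
  | cons a t ih =>
    rw [wordMap_cons, image_comp]
    exact (image_mono ih).trans (piece_subset hEdef a)

lemma cyl_cover (hEdef : E = ⋃ j, φ j '' E) (L : ℕ) :
    ∀ y ∈ E, ∃ w : List (Fin m), w.length = L ∧ y ∈ wordMap φ w '' E := by
  induction L with
  | zero => intro y hy; exact ⟨[], rfl, by simpa [wordMap_nil] using hy⟩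
  | succ L ih =>
    intro y hy
    rw [hEdef] at hy
    obtain ⟨j, y', hy', rfl⟩ := by simpa only [mem_iUnion] using hy
    obtain ⟨w, hw, z, hz, rfl⟩ := ih y' hy'
    exact ⟨j :: w, by simp [hw], z, hz, rfl⟩

lemma gap_exists (hρ : ∀ j, 0 ≤ ρ j) (hφ : ∀ j, IsSimilarity (ρ j) (φ j))
    (hEcomp : IsCompact E)
    (hEdisj : Pairwise fun j k => Disjoint (φ j '' E) (φ k '' E)) :
    ∃ g0 > (0:ℝ), ∀ j k, j ≠ k → ∀ x ∈ φ j '' E, ∀ y ∈ φ k '' E, g0 ≤ dist x y := by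
  set Z : Set (X × X) :=
    ⋃ (p : Fin m × Fin m) (_ : p.1 ≠ p.2), (φ p.1 '' E) ×ˢ (φ p.2 '' E) with hZ
  have hZcomp : IsCompact Z := by
    apply isCompact_iUnion
    intro p
    apply isCompact_iUnion
    intro _
    exact (hEcomp.image (sim_continuous (hρ p.1) (hφ p.1))).prod
      (hEcomp.image (sim_continuous (hρ p.2) (hφ p.2)))
  have hmem : ∀ j k, j ≠ k → ∀ x ∈ φ j '' E, ∀ y ∈ φ k '' E, (x, y) ∈ Z := by
    intro j k hjk x hx y hy
    exact mem_iUnion.mpr ⟨(j, k), mem_iUnion.mpr ⟨hjk, mem_prod.mpr ⟨hx, hy⟩⟩⟩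
  rcases Z.eq_empty_or_nonempty with hZe | hZne
  · refine ⟨1, one_pos, fun j k hjk x hx y hy => absurd (hmem j k hjk x hx y hy) ?_⟩
    rw [hZe]; exact notMem_empty _
  · obtain ⟨z, hzZ, hzmin⟩ := hZcomp.exists_isMinOn hZne
      ((continuous_dist.comp (continuous_fst.prodMk continuous_snd)).continuousOn)
    refine ⟨dist z.1 z.2, ?_, fun j k hjk x hx y hy => ?_⟩
    · obtain ⟨p, hp⟩ := mem_iUnion.mp hzZ
      obtain ⟨hpne, hz1, hz2⟩ := by simpa only [mem_iUnion, mem_prod] using hp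
      have : z.1 ≠ z.2 := fun h => (hEdisj hpne).ne_of_mem hz1 hz2 h
      exact dist_pos.mpr this
    · exact hzmin (hmem j k hjk x hx y hy)


lemma word_gap (hρ : ∀ j, 0 < ρ j) (hρ1 : ∀ j, ρ j ≤ 1)
    (hφ : ∀ j, IsSimilarity (ρ j) (φ j)) (hEdef : E = ⋃ j, φ j '' E)
    {g0 : ℝ} (hg0 : 0 < g0)
    (hgap : ∀ j k, j ≠ k → ∀ x ∈ φ j '' E, ∀ y ∈ φ k '' E, g0 ≤ dist x y) :
    ∀ (w : List (Fin m)) (x y : X), x ∈ wordMap φ w '' E → y ∈ E →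
      y ∉ wordMap φ w '' E → g0 * (w.map ρ).prod ≤ dist x y := by
  intro w
  induction w with
  | nil =>
    intro x y _ hy hyn
    rw [wordMap_nil, image_id] at hyn
    exact absurd hy hyn
  | cons a t ih =>
    intro x y hx hy hyn
    rw [wordMap_cons, image_comp] at hx hyn
    obtain ⟨x', hx', rfl⟩ := hx
    by_cases hya : y ∈ φ a '' E
    · obtain ⟨y', hy', rfl⟩ := hya
      have hy'n : y' ∉ wordMap φ t '' E := fun h => hyn (mem_image_of_mem (φ a) h)
      have := ih x' y' hx' hy' hy'n
      rw [hφ a x' y']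
      calc g0 * ((a :: t).map ρ).prod = ρ a * (g0 * (t.map ρ).prod) := by
            simp [List.prod_cons]; ring
        _ ≤ ρ a * dist x' y' := by
            exact mul_le_mul_of_nonneg_left this (hρ a).le
    · rw [hEdef] at hy
      obtain ⟨k, hk⟩ := mem_iUnion.mp hy
      have hka : k ≠ a := fun h => hya (h ▸ hk)
      have hxa : φ a x' ∈ φ a '' E := mem_image_of_mem _ (cyl_subset hEdef t hx')
      have h1 : g0 ≤ dist y (φ a x') := hgap k a hka y hk _ hxa
      rw [dist_comm]
      calc g0 * ((a :: t).map ρ).prod ≤ g0 * 1 := by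
            apply mul_le_mul_of_nonneg_left _ hg0.le
            exact prod_map_le_one hρ hρ1 _
        _ ≤ dist y (φ a x') := by simpa using h1

lemma cyl_nested (hρ : ∀ j, 0 < ρ j) (hφ : ∀ j, IsSimilarity (ρ j) (φ j))
    (hEdef : E = ⋃ j, φ j '' E)
    (hEdisj : Pairwise fun j k => Disjoint (φ j '' E) (φ k '' E)) :
    ∀ (w₁ w₂ : List (Fin m)), (wordMap φ w₁ '' E ∩ wordMap φ w₂ '' E).Nonempty →
      w₁ <+: w₂ ∨ w₂ <+: w₁ := by
  intro w₁
  induction w₁ with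
  | nil => intro w₂ _; exact Or.inl List.nil_prefix
  | cons a t ih =>
    intro w₂ hne
    cases w₂ with
    | nil => exact Or.inr List.nil_prefix
    | cons b t₂ =>
      obtain ⟨z, hz1, hz2⟩ := hne
      rw [wordMap_cons, image_comp] at hz1 hz2
      have hzab : z ∈ φ a '' E := (image_mono (f := φ a) (cyl_subset hEdef t)) hz1
      have hzbb : z ∈ φ b '' E := (image_mono (f := φ b) (cyl_subset hEdef t₂)) hz2
      have hab : a = b := by
        by_contra hne'
        exact (hEdisj hne').ne_of_mem hzab hzbb rfl
      subst hab
      obtain ⟨z₁, hz₁, hz₁e⟩ := hz1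
      obtain ⟨z₂, hz₂, hz₂e⟩ := hz2
      have : z₁ = z₂ := sim_injective (hρ a) (hφ a) (hz₁e.trans hz₂e.symm)
      subst this
      rcases ih t₂ ⟨z₁, hz₁, hz₂⟩ with h | h
      · exact Or.inl (List.cons_prefix_cons.mpr ⟨rfl, h⟩)
      · exact Or.inr (List.cons_prefix_cons.mpr ⟨rfl, h⟩)

lemma prefix_cyl_subset (hEdef : E = ⋃ j, φ j '' E) {w₁ w₂ : List (Fin m)}
    (h : w₁ <+: w₂) : wordMap φ w₂ '' E ⊆ wordMap φ w₁ '' E := by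
  obtain ⟨u, rfl⟩ := h
  rw [wordMap_append, image_comp]
  exact image_mono (cyl_subset hEdef u)

lemma max_cover_word (hρ : ∀ j, 0 < ρ j) (hφ : ∀ j, IsSimilarity (ρ j) (φ j))
    (hEdef : E = ⋃ j, φ j '' E)
    {g0 : ℝ} (hgap : ∀ j k, j ≠ k → ∀ x ∈ φ j '' E, ∀ y ∈ φ k '' E, g0 ≤ dist x y)
    {q dB : ℝ} (hq0 : 0 < q) (hq1 : q < 1) (hρq : ∀ j, ρ j ≤ q)
    (hdB : ∀ x ∈ E, ∀ y ∈ E, dist x y ≤ dB)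
    (D : Set X) (hDF : D ⊆ E) {x₀ y₀ : X} (hx₀ : x₀ ∈ D) (hy₀ : y₀ ∈ D)
    {δ : ℝ} (hδ : 0 < δ) (hdist : δ ≤ dist x₀ y₀) :
    ∃ w : List (Fin m), D ⊆ wordMap φ w '' E ∧
      (∀ v : List (Fin m), D ⊆ wordMap φ v '' E → v.length ≤ w.length) ∧
      (∃ a ∈ D, ∃ b ∈ D, (w.map ρ).prod * g0 ≤ dist a b) := by
  have hdB0 : 0 < dB := lt_of_lt_of_le hδ (hdist.trans (hdB _ (hDF hx₀) _ (hDF hy₀)))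
  set S : Set ℕ := {l | ∃ w : List (Fin m), w.length = l ∧ D ⊆ wordMap φ w '' E} with hS
  have h0S : 0 ∈ S := ⟨[], rfl, by simpa [wordMap_nil] using hDF⟩
  obtain ⟨N, hN⟩ : ∃ N : ℕ, q ^ N < δ / dB :=
    exists_pow_lt_of_lt_one (div_pos hδ hdB0) hq1
  have hbdd : ∀ l ∈ S, l < N := by
    rintro l ⟨w, hwl, hwD⟩
    by_contra hln
    push_neg at hln
    obtain ⟨a, ha, rfl⟩ := hwD hx₀
    obtain ⟨b, hb, rfl⟩ := hwD hy₀
    have hd : dist (wordMap φ w a) (wordMap φ w b) = (w.map ρ).prod * dist a b :=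
      wordMap_sim hφ w a b
    have h1 : δ ≤ (w.map ρ).prod * dist a b := hd ▸ hdist
    have h2 : (w.map ρ).prod * dist a b ≤ q ^ l * dB := by
      apply mul_le_mul (hwl ▸ prod_map_le_pow hq0.le hρ hρq w) (hdB a ha b hb)
        dist_nonneg (pow_nonneg hq0.le l)
    have h3 : q ^ l ≤ q ^ N := pow_le_pow_of_le_one hq0.le hq1.le hln
    have : δ < δ := by
      calc δ ≤ q ^ l * dB := h1.trans h2
        _ ≤ q ^ N * dB := by nlinarith
        _ < (δ / dB) * dB := by nlinarith
        _ = δ := by field_simp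
    exact absurd this (lt_irrefl δ)
  have hSbdd : BddAbove S := ⟨N, fun l hl => (hbdd l hl).le⟩
  have hmem := Nat.sSup_mem ⟨0, h0S⟩ hSbdd
  obtain ⟨w, hwlen, hwD⟩ := hmem
  refine ⟨w, hwD, fun v hv => by rw [hwlen]; exact le_csSup hSbdd ⟨v, rfl, hv⟩, ?_⟩
  -- D is not contained in any child cylinder
  have hchild : ∀ j : Fin m, ¬ D ⊆ wordMap φ (w ++ [j]) '' E := by
    intro j hcon
    have : (w ++ [j]).length ≤ sSup S := le_csSup hSbdd ⟨w ++ [j], rfl, hcon⟩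
    rw [← hwlen] at this
    simp at this
  obtain ⟨c, hcF, hceq⟩ := hwD hx₀
  rw [hEdef] at hcF
  obtain ⟨j, hcj⟩ := mem_iUnion.mp hcF
  obtain ⟨z, hzD, hznot⟩ := not_subset.mp (hchild j)
  obtain ⟨c', hc'F, hc'eq⟩ := hwD hzD
  have hc'in : c' ∈ E := hc'F
  rw [hEdef] at hc'F
  obtain ⟨k, hck⟩ := mem_iUnion.mp hc'F
  have hkj : k ≠ j := by
    rintro rfl
    apply hznot
    rw [wordMap_append, image_comp, wordMap_singleton]
    exact hc'eq ▸ mem_image_of_mem (wordMap φ w) hck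
  have hgap' : g0 ≤ dist c' c := hgap k j hkj c' hck c hcj
  refine ⟨x₀, hx₀, z, hzD, ?_⟩
  rw [← hceq, ← hc'eq, wordMap_sim hφ w c c']
  exact mul_le_mul_of_nonneg_left (by rw [dist_comm]; exact hgap') (prod_map_pos hρ w).le

lemma gapped_family_finite [Finite (Fin m)] (hρ : ∀ j, 0 < ρ j)
    (hφ : ∀ j, IsSimilarity (ρ j) (φ j)) (hEdef : E = ⋃ j, φ j '' E)
    {q dB : ℝ} (hq0 : 0 < q) (hq1 : q < 1) (hρq : ∀ j, ρ j ≤ q)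
    (hdB : ∀ x ∈ E, ∀ y ∈ E, dist x y ≤ dB)
    {c : ℝ} (hc : 0 < c) :
    {B : Set X | B ⊆ E ∧ ∀ x ∈ B, ∀ y ∈ E \ B, c ≤ dist x y}.Finite := by
  rcases le_or_gt dB 0 with hdB0 | hdB0
  · -- E has at most one point, any B ⊆ E is ∅ or E
    apply Set.Finite.subset ((Set.finite_singleton E).insert ∅)
    rintro B ⟨hBE, hBgap⟩
    rcases B.eq_empty_or_nonempty with rfl | ⟨b, hb⟩
    · exact mem_insert _ _
    · refine mem_insert_iff.mpr (Or.inr (mem_singleton_iff.mpr ?_))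
      apply Subset.antisymm hBE
      intro y hy
      by_contra hyB
      have h1 := hBgap b hb y ⟨hy, hyB⟩
      have h2 : dist b y ≤ dB := hdB b (hBE hb) y hy
      linarith
  · obtain ⟨L, hL⟩ : ∃ L : ℕ, q ^ L < c / dB := exists_pow_lt_of_lt_one (div_pos hc hdB0) hq1
    have hsmall : ∀ w : List (Fin m), w.length = L → ∀ x ∈ wordMap φ w '' E,
        ∀ y ∈ wordMap φ w '' E, dist x y < c := by
      rintro w hwl x ⟨a, ha, rfl⟩ y ⟨b, hb, rfl⟩
      rw [wordMap_sim hφ w a b]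
      calc (w.map ρ).prod * dist a b ≤ q ^ L * dB := by
            apply mul_le_mul (hwl ▸ prod_map_le_pow hq0.le hρ hρq w) (hdB a ha b hb)
              dist_nonneg (pow_nonneg hq0.le L)
        _ < (c / dB) * dB := by nlinarith
        _ = c := by field_simp
    apply Set.Finite.subset (Set.Finite.image
      (fun V : Set (List (Fin m)) => ⋃ w ∈ V, wordMap φ w '' E)
      ((List.finite_length_eq (Fin m) L).finite_subsets))
    rintro B ⟨hBE, hBgap⟩
    refine ⟨{w | w.length = L ∧ (wordMap φ w '' E ∩ B).Nonempty}, fun w hw => hw.1, ?_⟩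
    apply Subset.antisymm
    · rintro x hx
      simp only [mem_iUnion] at hx
      obtain ⟨w, ⟨hwL, x₀, hx₀c, hx₀B⟩, hxw⟩ := hx
      by_contra hxB
      have hxE : x ∈ E := cyl_subset hEdef w hxw
      have := hBgap x₀ hx₀B x ⟨hxE, hxB⟩
      have := hsmall w hwL x₀ hx₀c x hxw
      linarith
    · intro x hx
      obtain ⟨w, hwL, hxw⟩ := cyl_cover hEdef L x (hBE hx)
      simp only [mem_iUnion]
      exact ⟨w, ⟨hwL, ⟨x, hxw, hx⟩⟩, hxw⟩

end Words

lemma biLip_injOn {f : X → X} {C : ℝ} (hC : 0 < C) {E : Set X}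
    (hlip : ∀ x ∈ E, ∀ y ∈ E,
      C⁻¹ * dist x y ≤ dist (f x) (f y) ∧ dist (f x) (f y) ≤ C * dist x y) :
    Set.InjOn f E := by
  intro x hx y hy hxy
  have h := (hlip x hx y hy).1
  rw [hxy, dist_self] at h
  have hCi : 0 < C⁻¹ := inv_pos.mpr hC
  have hd : dist x y ≤ 0 := by nlinarith [dist_nonneg (x := x) (y := y)]
  exact dist_le_zero.mp hd

lemma biLip_measure_bounds [MeasurableSpace X] [BorelSpace X] [Nonempty X]
    {f : X → X} {C : ℝ} (hC : 0 < C) {E : Set X}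
    (hlip : ∀ x ∈ E, ∀ y ∈ E,
      C⁻¹ * dist x y ≤ dist (f x) (f y) ∧ dist (f x) (f y) ≤ C * dist x y)
    {s : ℝ} (hs : 0 ≤ s) {A : Set X} (hA : A ⊆ E) :
    μH[s] (f '' A) ≤ (C.toNNReal : ℝ≥0∞) ^ s * μH[s] A ∧
    μH[s] A ≤ (C.toNNReal : ℝ≥0∞) ^ s * μH[s] (f '' A) := by
  constructor
  · apply LipschitzOnWith.hausdorffMeasure_image_le _ hs
    rw [lipschitzOnWith_iff_dist_le_mul]
    intro x hx y hy
    rw [Real.coe_toNNReal _ hC.le]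
    exact (hlip x (hA hx) y (hA hy)).2
  · have hinj := biLip_injOn hC hlip
    set g' := Function.invFunOn f E with hg'
    have hleft : ∀ a ∈ E, g' (f a) = a := fun a ha => hinj.leftInvOn_invFunOn ha
    have hginv : A ⊆ g' '' (f '' A) := fun a ha =>
      ⟨f a, mem_image_of_mem f ha, hleft a (hA ha)⟩
    refine le_trans (measure_mono hginv) (LipschitzOnWith.hausdorffMeasure_image_le ?_ hs)
    rw [lipschitzOnWith_iff_dist_le_mul]
    rintro x ⟨a, ha, rfl⟩ y ⟨b, hb, rfl⟩
    rw [hleft a (hA ha), hleft b (hA hb), Real.coe_toNNReal _ hC.le]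
    have h1 := (hlip a (hA ha) b (hA hb)).1
    have h2 := mul_le_mul_of_nonneg_left h1 hC.le
    rwa [← mul_assoc, mul_inv_cancel₀ hC.ne', one_mul] at h2

lemma ennreal_div_helper {qq tt pp rr e b b' : ℝ≥0∞}
    (hq0 : qq ≠ 0) (hqt : qq ≠ ∞) (ht0 : tt ≠ 0) (htt : tt ≠ ∞)
    (hp0 : pp ≠ 0) (hpt : pp ≠ ∞) (hr0 : rr ≠ 0) (hrt : rr ≠ ∞)
    (he0 : e ≠ 0) (het : e ≠ ∞) (hb0 : b ≠ 0) (hbt : b ≠ ∞)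
    (hb'0 : b' ≠ 0) (hb't : b' ≠ ∞) :
    ((qq * tt * b') / (pp * rr * e)) / ((qq * b) / (pp * e)) = (tt * b') / (rr * b) := by
  have hnum1 : qq * tt * b' ≠ ∞ := ENNReal.mul_ne_top (ENNReal.mul_ne_top hqt htt) hb't
  have hden1 : pp * rr * e ≠ 0 := mul_ne_zero (mul_ne_zero hp0 hr0) he0
  have hnum2 : qq * b ≠ 0 := mul_ne_zero hq0 hb0
  have hden2 : pp * e ≠ ∞ := ENNReal.mul_ne_top hpt het
  have hL1 : (qq * tt * b') / (pp * rr * e) ≠ ∞ := (ENNReal.div_lt_top hnum1 hden1).ne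
  have hL2 : (qq * b) / (pp * e) ≠ 0 := (ENNReal.div_pos hnum2 hden2).ne'
  have hLne : ((qq * tt * b') / (pp * rr * e)) / ((qq * b) / (pp * e)) ≠ ∞ :=
    (ENNReal.div_lt_top hL1 hL2).ne
  have hRne : (tt * b') / (rr * b) ≠ ∞ :=
    (ENNReal.div_lt_top (ENNReal.mul_ne_top htt hb't) (mul_ne_zero hr0 hb0)).ne
  rw [← ENNReal.toReal_eq_toReal_iff' hLne hRne]
  rw [ENNReal.toReal_div, ENNReal.toReal_div, ENNReal.toReal_div, ENNReal.toReal_div,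
    ENNReal.toReal_mul, ENNReal.toReal_mul, ENNReal.toReal_mul, ENNReal.toReal_mul,
    ENNReal.toReal_mul, ENNReal.toReal_mul]
  have hq := ENNReal.toReal_ne_zero.mpr ⟨hq0, hqt⟩
  have hp := ENNReal.toReal_ne_zero.mpr ⟨hp0, hpt⟩
  have hr := ENNReal.toReal_ne_zero.mpr ⟨hr0, hrt⟩
  have he := ENNReal.toReal_ne_zero.mpr ⟨he0, het⟩
  have hb := ENNReal.toReal_ne_zero.mpr ⟨hb0, hbt⟩
  have ht := ENNReal.toReal_ne_zero.mpr ⟨ht0, htt⟩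
  field_simp
  simp only [ENNReal.toReal_mul]
  ring

end AuxRSM

set_option maxHeartbeats 1000000 in
open AuxRSM in
theorem ratio_set_of_martingale_finite
    (d m n : ℕ) (hd : 1 ≤ d)
    (ρ : Fin m → ℝ) (τ : Fin n → ℝ)
    (hρ : IsContractionVector d m ρ) (hτ : IsContractionVector d n τ)
    (E F : Set (EuclideanSpace ℝ (Fin d)))
    (hEne : E.Nonempty) (hEcomp : IsCompact E)
    (φ : Fin m → EuclideanSpace ℝ (Fin d) → EuclideanSpace ℝ (Fin d))
    (hφ : ∀ j, IsSimilarity (ρ j) (φ j))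
    (hEdef : E = ⋃ j, φ j '' E)
    (hEdisj : Pairwise fun j k => Disjoint (φ j '' E) (φ k '' E))
    (hFne : F.Nonempty) (hFcomp : IsCompact F)
    (ψ : Fin n → EuclideanSpace ℝ (Fin d) → EuclideanSpace ℝ (Fin d))
    (hψ : ∀ j, IsSimilarity (τ j) (ψ j))
    (hFdef : F = ⋃ j, ψ j '' F)
    (hFdisj : Pairwise fun j k => Disjoint (ψ j '' F) (ψ k '' F))
    (f : EuclideanSpace ℝ (Fin d) → EuclideanSpace ℝ (Fin d)) (C : ℝ) (hC : 0 < C)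
    (hbij : Set.BijOn f E F)
    (hlip : ∀ x ∈ E, ∀ y ∈ E,
      C⁻¹ * dist x y ≤ dist (f x) (f y) ∧ dist (f x) (f y) ≤ C * dist x y)
    (s : ℝ) (hs : 0 < s)
    (hρs : ∑ j, ρ j ^ s = 1) (hτs : ∑ j, τ j ^ s = 1) :
    -- the x ∈ E_i with |i| = k ≥ 1 realize g_k(x) = H^s(f(E_i))/H^s(E_i), so
    -- the set {g_{k+1}(x)/g_k(x) : x ∈ E, k ≥ 1} is the set below
    Set.Finite {x : ENNReal | ∃ (i : List (Fin m)) (j : Fin m), i ≠ [] ∧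
      x = (μH[s] (f '' (wordMap φ (i ++ [j]) '' E)) / μH[s] (wordMap φ (i ++ [j]) '' E)) /
          (μH[s] (f '' (wordMap φ i '' E)) / μH[s] (wordMap φ i '' E))} := by
  classical
  obtain ⟨hρmem, -⟩ := hρ
  obtain ⟨hτmem, -⟩ := hτ
  have hρpos : ∀ j, 0 < ρ j := fun j => (hρmem j).1
  have hρlt1 : ∀ j, ρ j < 1 := fun j => (hρmem j).2
  have hτpos : ∀ j, 0 < τ j := fun j => (hτmem j).1
  have hτlt1 : ∀ j, τ j < 1 := fun j => (hτmem j).2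
  have hs0 : (0:ℝ) ≤ s := hs.le
  -- n ≥ 1
  have hn : n ≠ 0 := by
    rintro rfl
    rw [hFdef] at hFne
    simpa using hFne
  have : NeZero n := ⟨hn⟩
  have hnfin : (Finset.univ : Finset (Fin n)).Nonempty := Finset.univ_nonempty
  -- two distinct indices in Fin m
  have hm2 : ∃ j₀ j₁ : Fin m, j₀ ≠ j₁ := by
    rcases m with - | - | m
    · rw [hEdef] at hEne; simpa using hEne
    · exfalso
      rw [Fin.sum_univ_one] at hρs
      have h1 : ρ 0 ^ s < 1 := Real.rpow_lt_one (hρpos 0).le (hρlt1 0) hs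
      linarith
    · exact ⟨0, 1, by simp [Fin.ext_iff]⟩
  obtain ⟨j₀, j₁, hj01⟩ := hm2
  have hmfin : (Finset.univ : Finset (Fin m)).Nonempty := ⟨j₀, Finset.mem_univ _⟩
  -- gaps
  obtain ⟨g0E, hg0E, hgapE⟩ := gap_exists (fun j => (hρpos j).le) hφ hEcomp hEdisj
  obtain ⟨g0F, hg0F, hgapF⟩ := gap_exists (fun j => (hτpos j).le) hψ hFcomp hFdisj
  -- diameter bounds
  obtain ⟨dE', hdE'⟩ := Metric.isBounded_iff.mp hEcomp.isBounded
  obtain ⟨dF', hdF'⟩ := Metric.isBounded_iff.mp hFcomp.isBounded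
  set dE := max dE' 1 with hdEdef
  set dF := max dF' 1 with hdFdef
  have hdE0 : (0:ℝ) < dE := lt_of_lt_of_le one_pos (le_max_right _ _)
  have hdF0 : (0:ℝ) < dF := lt_of_lt_of_le one_pos (le_max_right _ _)
  have hdE : ∀ x ∈ E, ∀ y ∈ E, dist x y ≤ dE :=
    fun x hx y hy => (hdE' hx hy).trans (le_max_left _ _)
  have hdF : ∀ x ∈ F, ∀ y ∈ F, dist x y ≤ dF :=
    fun x hx y hy => (hdF' hx hy).trans (le_max_left _ _)
  -- two points of E at distance ≥ g0E
  obtain ⟨p₀, hp₀⟩ := hEne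
  have hp1 : φ j₀ p₀ ∈ φ j₀ '' E := mem_image_of_mem _ hp₀
  have hp2 : φ j₁ p₀ ∈ φ j₁ '' E := mem_image_of_mem _ hp₀
  set pa := φ j₀ p₀ with hpadef
  set pb := φ j₁ p₀ with hpbdef
  have hpq : g0E ≤ dist pa pb := hgapE j₀ j₁ hj01 _ hp1 _ hp2
  have hpaE : pa ∈ E := piece_subset hEdef j₀ hp1
  have hpbE : pb ∈ E := piece_subset hEdef j₁ hp2
  -- τ max and ρ min
  set qF := Finset.univ.sup' hnfin τ with hqFdef
  have hqF1 : qF < 1 := (Finset.sup'_lt_iff hnfin).mpr fun j _ => hτlt1 j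
  have hτq : ∀ j, τ j ≤ qF := fun j => Finset.le_sup' τ (Finset.mem_univ j)
  have hqF0 : 0 < qF := lt_of_lt_of_le (hτpos ⟨0, Nat.pos_of_ne_zero hn⟩) (hτq _)
  set ρmin := Finset.univ.inf' hmfin ρ with hρmindef
  have hρmin0 : 0 < ρmin := (Finset.lt_inf'_iff hmfin).mpr fun j _ => hρpos j
  have hρminle : ∀ j, ρmin ≤ ρ j := fun j => Finset.inf'_le ρ (Finset.mem_univ j)
  -- constants
  set c₁ := g0E * g0F * ρmin / (C * C * dE * dF) with hc₁def
  have hc₁0 : 0 < c₁ := by positivity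
  set c₂ := g0E * g0F / (C * C * dE) with hc₂def
  have hc₂0 : 0 < c₂ := by positivity
  obtain ⟨N₁, hN₁⟩ : ∃ N, qF ^ N < c₁ := exists_pow_lt_of_lt_one hc₁0 hqF1
  -- the finite family of gapped subsets of F
  set 𝒜 := {B : Set (EuclideanSpace ℝ (Fin d)) |
      B ⊆ F ∧ ∀ x ∈ B, ∀ y ∈ F \ B, c₂ ≤ dist x y} with h𝒜def
  have h𝒜fin : 𝒜.Finite :=
    gapped_family_finite hτpos hψ hFdef hqF0 hqF1 hτq hdF hc₂0
  -- the finite superset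
  set T := (fun P : List (Fin n) × Fin m × Set (EuclideanSpace ℝ (Fin d)) ×
      Set (EuclideanSpace ℝ (Fin d)) =>
      (((P.1.map τ).prod.toNNReal : ℝ≥0∞) ^ s * μH[s] P.2.2.2) /
      (((ρ P.2.1).toNNReal : ℝ≥0∞) ^ s * μH[s] P.2.2.1)) ''
      (({u : List (Fin n) | u.length ≤ N₁}) ×ˢ (univ : Set (Fin m)) ×ˢ 𝒜 ×ˢ 𝒜) with hT
  have hTfin : T.Finite := Set.Finite.image _ ((List.finite_length_le (Fin n) N₁).prod
      ((Set.finite_univ).prod (h𝒜fin.prod h𝒜fin)))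
  apply Set.Finite.subset (hTfin.insert 0)
  rintro x ⟨i, j, -, rfl⟩
  -- notation
  set E_i := wordMap φ i '' E with hE_idef
  set E' := wordMap φ (i ++ [j]) '' E with hE'def
  have hE'sub : E' ⊆ E_i := prefix_cyl_subset hEdef ⟨[j], rfl⟩
  have hEiE : E_i ⊆ E := cyl_subset hEdef i
  have hE'E : E' ⊆ E := cyl_subset hEdef _
  set P := (i.map ρ).prod with hPdef
  have hP0 : 0 < P := prod_map_pos hρpos i
  have hPP : (((i ++ [j]).map ρ)).prod = P * ρ j := by
    rw [List.map_append, List.prod_append]; simp [hPdef]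
  -- Hausdorff measure of cylinders
  have hμEi : μH[s] E_i = (P.toNNReal : ℝ≥0∞) ^ s * μH[s] E :=
    hausdorff_image_sim hP0 (wordMap_sim hφ i) hs0 E
  have hμE' : μH[s] E' = ((P * ρ j).toNNReal : ℝ≥0∞) ^ s * μH[s] E := by
    have h := hausdorff_image_sim (prod_map_pos hρpos (i ++ [j]))
      (wordMap_sim hφ (i ++ [j])) hs0 E
    rwa [hPP] at h
  -- helper for rpow nonzero/finite
  have key : ∀ r : ℝ, 0 < r → ((r.toNNReal : ℝ≥0∞) ^ s ≠ 0 ∧ (r.toNNReal : ℝ≥0∞) ^ s ≠ ∞) := by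
    intro r hr
    constructor
    · exact (ENNReal.rpow_pos (ENNReal.coe_pos.mpr (Real.toNNReal_pos.mpr hr))
        ENNReal.coe_ne_top).ne'
    · exact ENNReal.rpow_ne_top_of_nonneg hs0 ENNReal.coe_ne_top
  -- degenerate case 1 : μH[s] E = 0
  rcases eq_or_ne (μH[s] E) 0 with hE0 | hE0
  · have hμE'0 : μH[s] E' = 0 := by rw [hμE', hE0, mul_zero]
    have hfD'0 : μH[s] (f '' E') = 0 := by
      have hb := (biLip_measure_bounds hC hlip hs0 hE'E).1
      rw [hμE'0, mul_zero] at hb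
      exact le_antisymm hb zero_le
    refine mem_insert_iff.mpr (Or.inl ?_)
    rw [hfD'0]
    simp [ENNReal.zero_div]
  -- degenerate case 2 : μH[s] E = ∞
  rcases eq_or_ne (μH[s] E) ∞ with hEtop | hEtop
  · have hμE'top : μH[s] E' = ∞ := by
      rw [hμE', hEtop, ENNReal.mul_top (key _ (mul_pos hP0 (hρpos j))).1]
    refine mem_insert_iff.mpr (Or.inl ?_)
    rw [hμE'top]
    simp [ENNReal.div_top, ENNReal.zero_div]
  -- main case
  set D := f '' E_i with hDdef
  set D' := f '' E' with hD'def
  have hD'D : D' ⊆ D := image_mono hE'sub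
  have hDF : D ⊆ F := by rw [← hbij.image_eq]; exact image_mono hEiE
  have hD'F : D' ⊆ F := hD'D.trans hDF
  -- distinguished points in D'
  set Φ' := wordMap φ (i ++ [j]) with hΦ'def
  have hΦ'pa : Φ' pa ∈ E' := mem_image_of_mem _ hpaE
  have hΦ'pb : Φ' pb ∈ E' := mem_image_of_mem _ hpbE
  set x₀ := f (Φ' pa) with hx₀def
  set y₀ := f (Φ' pb) with hy₀def
  have hx₀ : x₀ ∈ D' := mem_image_of_mem f hΦ'pa
  have hy₀ : y₀ ∈ D' := mem_image_of_mem f hΦ'pb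
  set δ := C⁻¹ * ((P * ρ j) * g0E) with hδdef
  have hδ0 : 0 < δ :=
    mul_pos (inv_pos.mpr hC) (mul_pos (mul_pos hP0 (hρpos j)) hg0E)
  have hd₀ : δ ≤ dist x₀ y₀ := by
    have h1 : dist (Φ' pa) (Φ' pb) = (P * ρ j) * dist pa pb := by
      have := wordMap_sim hφ (i ++ [j]) pa pb
      rwa [hPP] at this
    have h2 := (hlip _ (hE'E hΦ'pa) _ (hE'E hΦ'pb)).1
    rw [h1] at h2
    refine le_trans ?_ h2
    have hCi : (0:ℝ) < C⁻¹ := inv_pos.mpr hC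
    have : (P * ρ j) * g0E ≤ (P * ρ j) * dist pa pb := by
      apply mul_le_mul_of_nonneg_left hpq
      have := hρpos j; positivity
    exact mul_le_mul_of_nonneg_left this hCi.le
  -- distances within D and D'
  have hDdiam : ∀ a ∈ D, ∀ b ∈ D, dist a b ≤ C * (P * dE) := by
    rintro - ⟨u₁, hu₁, rfl⟩ - ⟨v₁, hv₁, rfl⟩
    have h2 := (hlip u₁ (hEiE hu₁) v₁ (hEiE hv₁)).2
    obtain ⟨u₀, hu₀, rfl⟩ := hu₁
    obtain ⟨v₀, hv₀, rfl⟩ := hv₁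
    have h3 : dist (wordMap φ i u₀) (wordMap φ i v₀) = P * dist u₀ v₀ :=
      wordMap_sim hφ i u₀ v₀
    rw [h3] at h2
    refine h2.trans ?_
    have h4 : P * dist u₀ v₀ ≤ P * dE :=
      mul_le_mul_of_nonneg_left (hdE u₀ hu₀ v₀ hv₀) hP0.le
    exact mul_le_mul_of_nonneg_left h4 hC.le
  have hD'diam : ∀ a ∈ D', ∀ b ∈ D', dist a b ≤ C * ((P * ρ j) * dE) := by
    rintro - ⟨u₁, hu₁, rfl⟩ - ⟨v₁, hv₁, rfl⟩
    have h2 := (hlip u₁ (hE'E hu₁) v₁ (hE'E hv₁)).2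
    obtain ⟨u₀, hu₀, rfl⟩ := hu₁
    obtain ⟨v₀, hv₀, rfl⟩ := hv₁
    have h3 : dist (wordMap φ (i ++ [j]) u₀) (wordMap φ (i ++ [j]) v₀)
        = (P * ρ j) * dist u₀ v₀ := by
      have := wordMap_sim hφ (i ++ [j]) u₀ v₀
      rwa [hPP] at this
    rw [h3] at h2
    refine h2.trans ?_
    have hPj0 : 0 < P * ρ j := by have := hρpos j; positivity
    have h4 : (P * ρ j) * dist u₀ v₀ ≤ (P * ρ j) * dE :=
      mul_le_mul_of_nonneg_left (hdE u₀ hu₀ v₀ hv₀) hPj0.le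
    exact mul_le_mul_of_nonneg_left h4 hC.le
  -- maximal covering cylinders
  obtain ⟨w, hDw, hwmax, a, haD, b, hbD, hab⟩ :=
    max_cover_word hτpos hψ hFdef hgapF hqF0 hqF1 hτq hdF D hDF (hD'D hx₀) (hD'D hy₀) hδ0 hd₀
  obtain ⟨w', hD'w', hw'max, a', ha'D, b', hb'D, ha'b'⟩ :=
    max_cover_word hτpos hψ hFdef hgapF hqF0 hqF1 hτq hdF D' hD'F hx₀ hy₀ hδ0 hd₀
  set Q := (w.map τ).prod with hQdef
  set Q' := (w'.map τ).prod with hQ'def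
  have hQ0 : 0 < Q := prod_map_pos hτpos w
  have hQ'0 : 0 < Q' := prod_map_pos hτpos w'
  have hQup : Q * g0F ≤ C * (P * dE) := le_trans hab (hDdiam a haD b hbD)
  have hQ'up : Q' * g0F ≤ C * ((P * ρ j) * dE) := le_trans ha'b' (hD'diam a' ha'D b' hb'D)
  have hQ'low : δ ≤ Q' * dF := by
    obtain ⟨aa, haaF, haae⟩ := hD'w' hx₀
    obtain ⟨bb, hbbF, hbbe⟩ := hD'w' hy₀
    calc δ ≤ dist x₀ y₀ := hd₀
      _ = Q' * dist aa bb := by rw [← haae, ← hbbe, wordMap_sim hψ w' aa bb]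
      _ ≤ Q' * dF := mul_le_mul_of_nonneg_left (hdF aa haaF bb hbbF) hQ'0.le
  -- w is a prefix of w'
  have hpre : w <+: w' := by
    have hD'w : D' ⊆ wordMap ψ w '' F := hD'D.trans hDw
    have hnested := cyl_nested hτpos hψ hFdef hFdisj w w' ⟨x₀, hD'w hx₀, hD'w' hx₀⟩
    have hlen : w.length ≤ w'.length := hw'max w hD'w
    rcases hnested with h | h
    · exact h
    · have := List.IsPrefix.eq_of_length h (le_antisymm h.length_le hlen)
      rw [this]
  obtain ⟨u, huw⟩ := hpre
  set tu := (u.map τ).prod with htudef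
  have htu0 : 0 < tu := prod_map_pos hτpos u
  have hQQ' : Q' = Q * tu := by
    rw [hQ'def, ← huw, List.map_append, List.prod_append, ← hQdef, ← htudef]
  -- tu is bounded below by c₁, hence u is short
  have htuc₁ : c₁ ≤ tu := by
    have h1 : (P * ρ j) * g0E ≤ C * (Q' * dF) := by
      rw [hδdef] at hQ'low
      rwa [inv_mul_le_iff₀ hC] at hQ'low
    rw [hQQ'] at h1
    -- goal : c₁ ≤ tu
    rw [hc₁def, div_le_iff₀ (by positivity)]
    have h2 : ((P * ρ j) * g0E) * g0F ≤ (C * ((Q * tu) * dF)) * g0F :=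
      mul_le_mul_of_nonneg_right h1 hg0F.le
    have h3 : (C * tu * dF) * (Q * g0F) ≤ (C * tu * dF) * (C * (P * dE)) :=
      mul_le_mul_of_nonneg_left hQup
        (mul_nonneg (mul_nonneg hC.le htu0.le) hdF0.le)
    have h5 : ρmin * (P * g0E * g0F) ≤ ρ j * (P * g0E * g0F) :=
      mul_le_mul_of_nonneg_right (hρminle j)
        (mul_nonneg (mul_nonneg hP0.le hg0E.le) hg0F.le)
    have h4 : P * (g0E * g0F * ρmin) ≤ P * (tu * (C * C * dE * dF)) := by
      nlinarith [h2, h3, h5]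
    exact le_of_mul_le_mul_left h4 hP0
  have hulen : u.length ≤ N₁ := by
    by_contra hlen
    push_neg at hlen
    have h5 : tu ≤ qF ^ u.length := prod_map_le_pow hqF0.le hτpos hτq u
    have h6 : qF ^ u.length ≤ qF ^ N₁ := pow_le_pow_of_le_one hqF0.le hqF1.le hlen.le
    linarith
  -- gap estimates for D and D'
  have hgapD : ∀ x ∈ D, ∀ y ∈ F \ D, C⁻¹ * (g0E * P) ≤ dist x y := by
    rintro - ⟨u₁, hu₁, rfl⟩ y ⟨hyF, hyD⟩
    obtain ⟨e, heE, rfl⟩ := hbij.2.2 hyF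
    have heNi : e ∉ E_i := fun h => hyD (mem_image_of_mem f h)
    have hwg := word_gap hρpos (fun k => (hρlt1 k).le) hφ hEdef hg0E hgapE i u₁ e hu₁ heE heNi
    calc C⁻¹ * (g0E * P) ≤ C⁻¹ * dist u₁ e := by
          apply mul_le_mul_of_nonneg_left hwg (inv_pos.mpr hC).le
      _ ≤ dist (f u₁) (f e) := (hlip u₁ (hEiE hu₁) e heE).1
  have hgapD' : ∀ x ∈ D', ∀ y ∈ F \ D', C⁻¹ * (g0E * (P * ρ j)) ≤ dist x y := by
    rintro - ⟨u₁, hu₁, rfl⟩ y ⟨hyF, hyD⟩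
    obtain ⟨e, heE, rfl⟩ := hbij.2.2 hyF
    have heNi : e ∉ E' := fun h => hyD (mem_image_of_mem f h)
    have hwg := word_gap hρpos (fun k => (hρlt1 k).le) hφ hEdef hg0E hgapE (i ++ [j])
      u₁ e hu₁ heE heNi
    rw [hPP] at hwg
    calc C⁻¹ * (g0E * (P * ρ j)) ≤ C⁻¹ * dist u₁ e := by
          apply mul_le_mul_of_nonneg_left hwg (inv_pos.mpr hC).le
      _ ≤ dist (f u₁) (f e) := (hlip u₁ (hE'E hu₁) e heE).1
  -- the normalized sets B and B'
  set B := F ∩ wordMap ψ w ⁻¹' D with hBdef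
  set B' := F ∩ wordMap ψ w' ⁻¹' D' with hB'def
  have hBeq : wordMap ψ w '' B = D := by
    apply Subset.antisymm
    · rintro - ⟨x, hx, rfl⟩; exact hx.2
    · intro y hy
      obtain ⟨c, hcF, rfl⟩ := hDw hy
      exact ⟨c, ⟨hcF, hy⟩, rfl⟩
  have hB'eq : wordMap ψ w' '' B' = D' := by
    apply Subset.antisymm
    · rintro - ⟨x, hx, rfl⟩; exact hx.2
    · intro y hy
      obtain ⟨c, hcF, rfl⟩ := hD'w' hy
      exact ⟨c, ⟨hcF, hy⟩, rfl⟩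
  -- B and B' belong to the finite family 𝒜
  have hB𝒜 : B ∈ 𝒜 := by
    refine ⟨inter_subset_left, ?_⟩
    intro x hx y hy
    have hΨx : wordMap ψ w x ∈ D := hx.2
    have hΨyF : wordMap ψ w y ∈ F := cyl_subset hFdef w (mem_image_of_mem _ hy.1)
    have hΨyD : wordMap ψ w y ∉ D := fun h => hy.2 ⟨hy.1, h⟩
    have hgap := hgapD _ hΨx _ ⟨hΨyF, hΨyD⟩
    have hdisteq : dist (wordMap ψ w x) (wordMap ψ w y) = Q * dist x y :=
      wordMap_sim hψ w x y
    rw [hdisteq] at hgap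
    -- from C⁻¹ * (g0E * P) ≤ Q * dist x y  and  Q * g0F ≤ C * (P * dE)
    have h1 : g0E * P ≤ C * (Q * dist x y) := by rwa [inv_mul_le_iff₀ hC] at hgap
    rw [hc₂def, div_le_iff₀ (by positivity)]
    have h2 : (g0E * P) * g0F ≤ (C * (Q * dist x y)) * g0F :=
      mul_le_mul_of_nonneg_right h1 hg0F.le
    have h3 : (C * dist x y) * (Q * g0F) ≤ (C * dist x y) * (C * (P * dE)) :=
      mul_le_mul_of_nonneg_left hQup (mul_nonneg hC.le dist_nonneg)
    have h4 : P * (g0E * g0F) ≤ P * (dist x y * (C * C * dE)) := by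
      nlinarith [h2, h3]
    exact le_of_mul_le_mul_left h4 hP0
  have hB'𝒜 : B' ∈ 𝒜 := by
    refine ⟨inter_subset_left, ?_⟩
    intro x hx y hy
    have hΨx : wordMap ψ w' x ∈ D' := hx.2
    have hΨyF : wordMap ψ w' y ∈ F := cyl_subset hFdef w' (mem_image_of_mem _ hy.1)
    have hΨyD : wordMap ψ w' y ∉ D' := fun h => hy.2 ⟨hy.1, h⟩
    have hgap := hgapD' _ hΨx _ ⟨hΨyF, hΨyD⟩
    have hdisteq : dist (wordMap ψ w' x) (wordMap ψ w' y) = Q' * dist x y :=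
      wordMap_sim hψ w' x y
    rw [hdisteq] at hgap
    have h1 : g0E * (P * ρ j) ≤ C * (Q' * dist x y) := by rwa [inv_mul_le_iff₀ hC] at hgap
    rw [hc₂def, div_le_iff₀ (by positivity)]
    have h2 : (g0E * (P * ρ j)) * g0F ≤ (C * (Q' * dist x y)) * g0F :=
      mul_le_mul_of_nonneg_right h1 hg0F.le
    have h3 : (C * dist x y) * (Q' * g0F) ≤ (C * dist x y) * (C * ((P * ρ j) * dE)) :=
      mul_le_mul_of_nonneg_left hQ'up (mul_nonneg hC.le dist_nonneg)
    have h4 : (P * ρ j) * (g0E * g0F) ≤ (P * ρ j) * (dist x y * (C * C * dE)) := by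
      nlinarith [h2, h3]
    exact le_of_mul_le_mul_left h4 (mul_pos hP0 (hρpos j))
  -- measure computations
  have hμD : μH[s] D = (Q.toNNReal : ℝ≥0∞) ^ s * μH[s] B := by
    rw [← hBeq]; exact hausdorff_image_sim hQ0 (wordMap_sim hψ w) hs0 B
  have hμD' : μH[s] D' = ((Q.toNNReal : ℝ≥0∞) ^ s * (tu.toNNReal : ℝ≥0∞) ^ s) * μH[s] B' := by
    rw [← hB'eq]
    have h := hausdorff_image_sim hQ'0 (wordMap_sim hψ w') hs0 B'
    rw [h, hQQ', Real.toNNReal_mul hQ0.le, ENNReal.coe_mul,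
      ENNReal.mul_rpow_of_ne_top ENNReal.coe_ne_top ENNReal.coe_ne_top]
  -- nonzero/finiteness facts
  have hcCs := key C hC
  have hcPs := key P hP0
  have hcQs := key Q hQ0
  have hcts := key tu htu0
  have hcrs := key (ρ j) (hρpos j)
  have hμEi0 : μH[s] E_i ≠ 0 := by
    rw [hμEi]; exact mul_ne_zero hcPs.1 hE0
  have hμEitop : μH[s] E_i ≠ ∞ := by
    rw [hμEi]; exact ENNReal.mul_ne_top hcPs.2 hEtop
  have hbnds := biLip_measure_bounds hC hlip hs0 hEiE
  have hbnds' := biLip_measure_bounds hC hlip hs0 hE'E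
  have hμD0 : μH[s] D ≠ 0 := by
    intro h
    apply hμEi0
    have h2 := hbnds.2
    rw [hDdef] at h
    rw [h, mul_zero] at h2
    exact le_antisymm h2 zero_le
  have hμDtop : μH[s] D ≠ ∞ := by
    have h2 := hbnds.1
    intro h
    rw [hDdef] at h
    rw [h] at h2
    exact (ENNReal.mul_ne_top hcCs.2 hμEitop) (top_le_iff.mp h2)
  have hμE'0 : μH[s] E' ≠ 0 := by
    rw [hμE']; exact mul_ne_zero (key _ (mul_pos hP0 (hρpos j))).1 hE0
  have hμE'top : μH[s] E' ≠ ∞ := by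
    rw [hμE']; exact ENNReal.mul_ne_top (key _ (mul_pos hP0 (hρpos j))).2 hEtop
  have hμD'0 : μH[s] D' ≠ 0 := by
    intro h
    apply hμE'0
    have h2 := hbnds'.2
    rw [hD'def] at h
    rw [h, mul_zero] at h2
    exact le_antisymm h2 zero_le
  have hμD'top : μH[s] D' ≠ ∞ := by
    have h2 := hbnds'.1
    intro h
    rw [hD'def] at h
    rw [h] at h2
    exact (ENNReal.mul_ne_top hcCs.2 hμE'top) (top_le_iff.mp h2)
  have hμB0 : μH[s] B ≠ 0 := fun h => hμD0 (by rw [hμD, h, mul_zero])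
  have hμBtop : μH[s] B ≠ ∞ := fun h => hμDtop (by rw [hμD, h, ENNReal.mul_top hcQs.1])
  have hμB'0 : μH[s] B' ≠ 0 := fun h => hμD'0 (by rw [hμD', h, mul_zero])
  have hμB'top : μH[s] B' ≠ ∞ := fun h => hμD'top (by
    rw [hμD', h, ENNReal.mul_top (mul_ne_zero hcQs.1 hcts.1)])
  -- final assembly
  have hsplit : ((P * ρ j).toNNReal : ℝ≥0∞) ^ s
      = (P.toNNReal : ℝ≥0∞) ^ s * ((ρ j).toNNReal : ℝ≥0∞) ^ s := by
    rw [Real.toNNReal_mul hP0.le, ENNReal.coe_mul,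
      ENNReal.mul_rpow_of_ne_top ENNReal.coe_ne_top ENNReal.coe_ne_top]
  refine mem_insert_iff.mpr (Or.inr ⟨(u, j, B, B'), ⟨hulen, mem_univ j, hB𝒜, hB'𝒜⟩, ?_⟩)
  dsimp only
  rw [← htudef]
  rw [hμD', hμE', hsplit, hμD, hμEi]
  exact (ennreal_div_helper hcQs.1 hcQs.2 hcts.1 hcts.2 hcPs.1 hcPs.2 hcrs.1 hcrs.2
    hE0 hEtop hμB0 hμBtop hμB'0 hμB'top).symm
end
end
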